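/- For every integer n ≥ 1: a_{1,2}(2n) = a_{2,1}(2n) = a_{2,2}(2n), and a_{1,1}(2n+1) = b_{1,2}(2n+1). -/

import Mathlib

/-- The 16-letter alphabet 𝒜 = {A,…,P}. -/
inductive A16 : Type
  | A | B | C | D | E | F | G | H | I | J | K | L | M | N | O | P
  deriving DecidableEq

/-- The 2×2 block substitution μ on 𝒜 (rows top to bottom). -/
def mu : A16 → Fin 2 → Fin 2 → A16
  | .A => ![![.A, .F], ![.G, .C]]
  | .B => ![![.A, .F], ![.H, .D]]
  | .C => ![![.B, .E], ![.G, .C]]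
  | .D => ![![.B, .E], ![.H, .D]]
  | .E => ![![.A, .N], ![.G, .K]]
  | .F => ![![.A, .N], ![.H, .L]]
  | .G => ![![.B, .M], ![.G, .K]]
  | .H => ![![.B, .M], ![.H, .L]]
  | .I => ![![.I, .F], ![.O, .C]]
  | .J => ![![.I, .F], ![.P, .D]]
  | .K => ![![.J, .E], ![.O, .C]]
  | .L => ![![.J, .E], ![.P, .D]]
  | .M => ![![.I, .N], ![.O, .K]]
  | .N => ![![.I, .N], ![.P, .L]]
  | .O => ![![.J, .M], ![.O, .K]]
  | .P => ![![.J, .M], ![.P, .L]]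

/-- Entry version of μ, indexed by arbitrary naturals (via mod 2). -/
def muE (x : A16) (r c : ℕ) : A16 :=
  mu x ⟨r % 2, by omega⟩ ⟨c % 2, by omega⟩

/-- `superE n x` is the supertile μⁿ(x), a 2ⁿ×2ⁿ array over 𝒜,
given as a total function on ℕ × ℕ (only indices < 2ⁿ are relevant). -/
def superE : ℕ → A16 → ℕ → ℕ → A16
  | 0, x, _, _ => x
  | n + 1, x, r, c => muE (superE n x (r / 2) (c / 2)) r c

/-- The supertile T_k = μᵏ(N). -/
def Tfun (k : ℕ) : ℕ → ℕ → A16 := superE k .N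

/-- An m×n pattern over the alphabet α. -/
abbrev Pat (α : Type) (m n : ℕ) := Fin m → Fin n → α

/-- The set of m×n patterns occurring in the size×size array X. -/
def patIn {α : Type} (X : ℕ → ℕ → α) (size m n : ℕ) : Set (Pat α m n) :=
  { p | ∃ r c : ℕ, r + m ≤ size ∧ c + n ≤ size ∧
      ∀ (i : Fin m) (j : Fin n), p i j = X (r + i) (c + j) }

/-- P(T, m×n) = ⋃ₖ P(T_k, m×n). -/
def PT (m n : ℕ) : Set (Pat A16 m n) := ⋃ k : ℕ, patIn (Tfun k) (2 ^ k) m n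

/-- μ applied to an m×n pattern, as a total 2m×2n array on ℕ × ℕ
(indices are reduced mod the valid range; in range this is exactly μ(p)). -/
def muPatE {m n : ℕ} (p : Pat A16 m n) (r c : ℕ) : A16 :=
  if hm : 0 < m then
    if hn : 0 < n then
      muE (p ⟨r / 2 % m, Nat.mod_lt _ hm⟩ ⟨c / 2 % n, Nat.mod_lt _ hn⟩) r c
    else .A
  else .A

/-- μ² applied to an m×n pattern, as a total 4m×4n array on ℕ × ℕ. -/
def mu2PatE {m n : ℕ} (p : Pat A16 m n) (r c : ℕ) : A16 :=
  muE (muPatE p (r / 2) (c / 2)) r c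

/-- P_{i,j}(T, m×n) = { μ(x)[i,j,m×n] : x ∈ P(T,m×n) } (1-based corner (i,j)). -/
def Pij (i j m n : ℕ) : Set (Pat A16 m n) :=
  { q | ∃ x ∈ PT m n, ∀ (a : Fin m) (b : Fin n),
      q a b = muPatE x (i - 1 + a) (j - 1 + b) }

/-- Q_{i,j}(T, m×n) = { μ²(x)[i,j,m×n] : x ∈ P(T,m×n) } (1-based corner (i,j)). -/
def Qij (i j m n : ℕ) : Set (Pat A16 m n) :=
  { q | ∃ x ∈ PT m n, ∀ (a : Fin m) (b : Fin n),
      q a b = mu2PatE x (i - 1 + a) (j - 1 + b) }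

/-- The 2×2 block substitution φ from 𝒜 to ℬ = {0,1,2,3}. -/
def phi : A16 → Fin 2 → Fin 2 → Fin 4
  | .A => ![![0, 1], ![0, 0]]
  | .B => ![![0, 1], ![1, 1]]
  | .C => ![![1, 0], ![0, 0]]
  | .D => ![![1, 0], ![1, 1]]
  | .E => ![![0, 3], ![0, 2]]
  | .F => ![![0, 3], ![1, 3]]
  | .G => ![![1, 2], ![0, 2]]
  | .H => ![![1, 2], ![1, 3]]
  | .I => ![![2, 1], ![2, 0]]
  | .J => ![![2, 1], ![3, 1]]
  | .K => ![![3, 0], ![2, 0]]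
  | .L => ![![3, 0], ![3, 1]]
  | .M => ![![2, 3], ![2, 2]]
  | .N => ![![2, 3], ![3, 3]]
  | .O => ![![3, 2], ![2, 2]]
  | .P => ![![3, 2], ![3, 3]]

/-- Entry version of φ, indexed by arbitrary naturals (via mod 2). -/
def phiE (x : A16) (r c : ℕ) : Fin 4 :=
  phi x ⟨r % 2, by omega⟩ ⟨c % 2, by omega⟩

/-- φ applied to an m×n pattern over 𝒜, as a total 2m×2n array on ℕ × ℕ. -/
def phiPatE {m n : ℕ} (p : Pat A16 m n) (r c : ℕ) : Fin 4 :=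
  if hm : 0 < m then
    if hn : 0 < n then
      phiE (p ⟨r / 2 % m, Nat.mod_lt _ hm⟩ ⟨c / 2 % n, Nat.mod_lt _ hn⟩) r c
    else 0
  else 0

/-- φ(T_k), a 2^(k+1)×2^(k+1) array over ℬ. -/
def Sfun (k : ℕ) (r c : ℕ) : Fin 4 := phiE (Tfun k (r / 2) (c / 2)) r c

/-- P(S, m×n) = ⋃_{k≥1} P(φ(T_{k-1}), m×n). -/
def PS (m n : ℕ) : Set (Pat (Fin 4) m n) :=
  ⋃ k : ℕ, patIn (Sfun k) (2 ^ (k + 1)) m n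

/-- P_{i,j}(S, m×n) = { φ(x)[i,j,m×n] : x ∈ P(T,m×n) } (1-based corner (i,j)). -/
def PSij (i j m n : ℕ) : Set (Pat (Fin 4) m n) :=
  { q | ∃ x ∈ PT m n, ∀ (a : Fin m) (b : Fin n),
      q a b = phiPatE x (i - 1 + a) (j - 1 + b) }

/-- A_n = |P(S, n×n)|. -/
noncomputable def Acnt (n : ℕ) : ℕ := Nat.card (PS n n)

/-- a_{i,j}(n) = |P_{i,j}(T, n×n)|. -/
noncomputable def aT (i j n : ℕ) : ℕ := Nat.card (Pij i j n n)

/-- b_{i,j}(n) = |P_{i,j}(T, n×(n+1))|. -/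
noncomputable def bT (i j n : ℕ) : ℕ := Nat.card (Pij i j n (n + 1))

/-- c_{i,j}(n) = |P_{i,j}(T, (n+1)×n)|. -/
noncomputable def cT (i j n : ℕ) : ℕ := Nat.card (Pij i j (n + 1) n)

set_option maxRecDepth 10000

namespace SecondABC

instance : Fintype A16 :=
  ⟨⟨([.A,.B,.C,.D,.E,.F,.G,.H,.I,.J,.K,.L,.M,.N,.O,.P] : List A16), by decide⟩,
   by intro x; cases x <;> decide⟩

lemma muE_eval (x : A16) (r c i j : ℕ) (hi : i < 2) (hj : j < 2)
    (hr : r % 2 = i) (hc : c % 2 = j) :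
    muE x r c = mu x ⟨i, hi⟩ ⟨j, hj⟩ := by subst hr; subst hc; rfl

lemma muE_congr (x : A16) (r c r' c' : ℕ) (hr : r % 2 = r' % 2) (hc : c % 2 = c' % 2) :
    muE x r c = muE x r' c' := by
  rw [muE_eval x r c (r' % 2) (c' % 2) (by omega) (by omega) hr hc]; rfl

lemma superE_succ (n : ℕ) (x : A16) (r c : ℕ) :
    superE (n+1) x r c = muE (superE n x (r / 2) (c / 2)) r c := rfl

lemma two_pow_succ (k : ℕ) : 2^(k+1) = 2 * 2^k := by rw [pow_succ, Nat.mul_comm]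

lemma superE_mod : ∀ (k : ℕ) (x : A16) (r c : ℕ),
    superE k x r c = superE k x (r % 2^k) (c % 2^k) := by
  intro k
  induction k with
  | zero => intro x r c; rfl
  | succ k ih =>
    intro x r c
    rw [superE_succ, superE_succ]
    have h1 : (r % 2^(k+1))/2 = (r/2) % 2^k := by
      rw [two_pow_succ]; exact Nat.mod_mul_right_div_self r 2 (2^k)
    have h2 : (c % 2^(k+1))/2 = (c/2) % 2^k := by
      rw [two_pow_succ]; exact Nat.mod_mul_right_div_self c 2 (2^k)
    rw [h1, h2, ← ih]
    exact muE_congr _ _ _ _ _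
      ((Nat.mod_mod_of_dvd r ⟨2^k, two_pow_succ k⟩).symm)
      ((Nat.mod_mod_of_dvd c ⟨2^k, two_pow_succ k⟩).symm)

lemma superE_add (a : ℕ) : ∀ (b : ℕ) (x : A16) (r c : ℕ),
    superE (a+b) x r c = superE b (superE a x (r / 2^b) (c / 2^b)) r c := by
  intro b
  induction b with
  | zero => intro x r c; simp [superE]
  | succ b ih =>
    intro x r c
    show superE ((a+b)+1) x r c = _
    rw [superE_succ, superE_succ, ih]
    have h1 : r/2/2^b = r/2^(b+1) := by
      rw [Nat.div_div_eq_div_mul, ← two_pow_succ]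
    have h2 : c/2/2^b = c/2^(b+1) := by
      rw [Nat.div_div_eq_div_mul, ← two_pow_succ]
    rw [h1, h2]

lemma Tfun_succ (k r c : ℕ) : Tfun (k+1) r c = muE (Tfun k (r/2) (c/2)) r c := rfl

lemma N_in_T3 : superE 3 A16.N 4 3 = A16.N := by decide

lemma Tfun_embed (k i j : ℕ) (hi : i < 2^k) (hj : j < 2^k) :
    Tfun (k+3) (4*2^k+i) (3*2^k+j) = Tfun k i j := by
  have hp : 0 < 2^k := Nat.pow_pos (by norm_num)
  have h1 : k+3 = 3+k := by omega
  rw [h1]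
  show superE (3+k) A16.N _ _ = _
  rw [superE_add 3 k]
  have hr : (4*2^k+i)/2^k = 4 := by
    rw [Nat.add_comm, Nat.mul_comm, Nat.add_mul_div_left i 4 hp, Nat.div_eq_of_lt hi]
  have hc : (3*2^k+j)/2^k = 3 := by
    rw [Nat.add_comm, Nat.mul_comm, Nat.add_mul_div_left j 3 hp, Nat.div_eq_of_lt hj]
  rw [hr, hc, N_in_T3]
  show superE k A16.N _ _ = superE k A16.N i j
  rw [superE_mod k]
  have hr' : (4*2^k+i) % 2^k = i := by
    rw [Nat.add_comm, Nat.mul_comm, Nat.add_mul_mod_self_left, Nat.mod_eq_of_lt hi]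
  have hc' : (3*2^k+j) % 2^k = j := by
    rw [Nat.add_comm, Nat.mul_comm, Nat.add_mul_mod_self_left, Nat.mod_eq_of_lt hj]
  rw [hr', hc']

def muv : A16 → Fin 2 → Fin 2 → A16
  | .A, 0, 0 => .A
  | .A, 0, 1 => .F
  | .A, 1, 0 => .G
  | .A, 1, 1 => .C
  | .B, 0, 0 => .A
  | .B, 0, 1 => .F
  | .B, 1, 0 => .H
  | .B, 1, 1 => .D
  | .C, 0, 0 => .B
  | .C, 0, 1 => .E
  | .C, 1, 0 => .G
  | .C, 1, 1 => .C
  | .D, 0, 0 => .B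
  | .D, 0, 1 => .E
  | .D, 1, 0 => .H
  | .D, 1, 1 => .D
  | .E, 0, 0 => .A
  | .E, 0, 1 => .N
  | .E, 1, 0 => .G
  | .E, 1, 1 => .K
  | .F, 0, 0 => .A
  | .F, 0, 1 => .N
  | .F, 1, 0 => .H
  | .F, 1, 1 => .L
  | .G, 0, 0 => .B
  | .G, 0, 1 => .M
  | .G, 1, 0 => .G
  | .G, 1, 1 => .K
  | .H, 0, 0 => .B
  | .H, 0, 1 => .M
  | .H, 1, 0 => .H
  | .H, 1, 1 => .L
  | .I, 0, 0 => .I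
  | .I, 0, 1 => .F
  | .I, 1, 0 => .O
  | .I, 1, 1 => .C
  | .J, 0, 0 => .I
  | .J, 0, 1 => .F
  | .J, 1, 0 => .P
  | .J, 1, 1 => .D
  | .K, 0, 0 => .J
  | .K, 0, 1 => .E
  | .K, 1, 0 => .O
  | .K, 1, 1 => .C
  | .L, 0, 0 => .J
  | .L, 0, 1 => .E
  | .L, 1, 0 => .P
  | .L, 1, 1 => .D
  | .M, 0, 0 => .I
  | .M, 0, 1 => .N
  | .M, 1, 0 => .O
  | .M, 1, 1 => .K
  | .N, 0, 0 => .I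
  | .N, 0, 1 => .N
  | .N, 1, 0 => .P
  | .N, 1, 1 => .L
  | .O, 0, 0 => .J
  | .O, 0, 1 => .M
  | .O, 1, 0 => .O
  | .O, 1, 1 => .K
  | .P, 0, 0 => .J
  | .P, 0, 1 => .M
  | .P, 1, 0 => .P
  | .P, 1, 1 => .L

def hok : A16 → A16 → Bool
  | A16.A, A16.F => true
  | A16.A, A16.N => true
  | A16.B, A16.E => true
  | A16.B, A16.M => true
  | A16.C, A16.G => true
  | A16.C, A16.H => true
  | A16.C, A16.O => true
  | A16.C, A16.P => true
  | A16.D, A16.G => true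
  | A16.D, A16.H => true
  | A16.D, A16.O => true
  | A16.D, A16.P => true
  | A16.E, A16.B => true
  | A16.E, A16.J => true
  | A16.F, A16.A => true
  | A16.F, A16.I => true
  | A16.G, A16.C => true
  | A16.G, A16.K => true
  | A16.H, A16.D => true
  | A16.H, A16.L => true
  | A16.I, A16.F => true
  | A16.I, A16.N => true
  | A16.J, A16.E => true
  | A16.J, A16.M => true
  | A16.K, A16.G => true
  | A16.K, A16.H => true
  | A16.K, A16.O => true
  | A16.K, A16.P => true
  | A16.L, A16.G => true
  | A16.L, A16.H => true
  | A16.L, A16.O => true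
  | A16.L, A16.P => true
  | A16.M, A16.B => true
  | A16.M, A16.J => true
  | A16.N, A16.A => true
  | A16.N, A16.I => true
  | A16.O, A16.C => true
  | A16.O, A16.K => true
  | A16.P, A16.D => true
  | A16.P, A16.L => true
  | _, _ => false
def vok : A16 → A16 → Bool
  | A16.A, A16.G => true
  | A16.A, A16.H => true
  | A16.B, A16.G => true
  | A16.B, A16.H => true
  | A16.C, A16.M => true
  | A16.C, A16.N => true
  | A16.D, A16.M => true
  | A16.D, A16.N => true
  | A16.E, A16.C => true
  | A16.E, A16.D => true
  | A16.F, A16.C => true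
  | A16.F, A16.D => true
  | A16.G, A16.A => true
  | A16.G, A16.B => true
  | A16.G, A16.I => true
  | A16.H, A16.A => true
  | A16.H, A16.B => true
  | A16.H, A16.I => true
  | A16.I, A16.O => true
  | A16.I, A16.P => true
  | A16.J, A16.O => true
  | A16.J, A16.P => true
  | A16.K, A16.E => true
  | A16.K, A16.F => true
  | A16.L, A16.E => true
  | A16.L, A16.F => true
  | A16.M, A16.K => true
  | A16.M, A16.L => true
  | A16.N, A16.K => true
  | A16.N, A16.L => true
  | A16.O, A16.A => true
  | A16.O, A16.I => true
  | A16.O, A16.J => true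
  | A16.P, A16.A => true
  | A16.P, A16.I => true
  | A16.P, A16.J => true
  | _, _ => false
def cok : A16 → A16 → A16 → A16 → Bool
  | A16.A, A16.F, A16.G, A16.C => true
  | A16.A, A16.F, A16.H, A16.D => true
  | A16.A, A16.N, A16.G, A16.K => true
  | A16.A, A16.N, A16.H, A16.L => true
  | A16.B, A16.E, A16.G, A16.C => true
  | A16.B, A16.E, A16.H, A16.D => true
  | A16.B, A16.M, A16.G, A16.K => true
  | A16.B, A16.M, A16.H, A16.L => true
  | A16.C, A16.G, A16.N, A16.I => true
  | A16.C, A16.H, A16.M, A16.B => true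
  | A16.C, A16.H, A16.N, A16.A => true
  | A16.C, A16.O, A16.N, A16.A => true
  | A16.C, A16.P, A16.M, A16.J => true
  | A16.C, A16.P, A16.N, A16.I => true
  | A16.D, A16.G, A16.M, A16.B => true
  | A16.D, A16.G, A16.N, A16.A => true
  | A16.D, A16.H, A16.N, A16.I => true
  | A16.D, A16.O, A16.M, A16.J => true
  | A16.D, A16.O, A16.N, A16.I => true
  | A16.D, A16.P, A16.N, A16.A => true
  | A16.E, A16.B, A16.C, A16.G => true
  | A16.E, A16.B, A16.C, A16.H => true
  | A16.E, A16.B, A16.D, A16.G => true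
  | A16.E, A16.B, A16.D, A16.H => true
  | A16.E, A16.J, A16.C, A16.O => true
  | A16.E, A16.J, A16.C, A16.P => true
  | A16.E, A16.J, A16.D, A16.O => true
  | A16.E, A16.J, A16.D, A16.P => true
  | A16.F, A16.A, A16.C, A16.H => true
  | A16.F, A16.A, A16.D, A16.G => true
  | A16.F, A16.I, A16.C, A16.P => true
  | A16.F, A16.I, A16.D, A16.O => true
  | A16.G, A16.C, A16.B, A16.M => true
  | A16.G, A16.C, A16.I, A16.N => true
  | A16.G, A16.K, A16.A, A16.F => true
  | A16.G, A16.K, A16.B, A16.E => true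
  | A16.G, A16.K, A16.I, A16.F => true
  | A16.H, A16.D, A16.B, A16.M => true
  | A16.H, A16.D, A16.I, A16.N => true
  | A16.H, A16.L, A16.A, A16.F => true
  | A16.H, A16.L, A16.B, A16.E => true
  | A16.H, A16.L, A16.I, A16.F => true
  | A16.I, A16.F, A16.O, A16.C => true
  | A16.I, A16.F, A16.P, A16.D => true
  | A16.I, A16.N, A16.O, A16.K => true
  | A16.I, A16.N, A16.P, A16.L => true
  | A16.J, A16.E, A16.O, A16.C => true
  | A16.J, A16.E, A16.P, A16.D => true
  | A16.J, A16.M, A16.O, A16.K => true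
  | A16.J, A16.M, A16.P, A16.L => true
  | A16.K, A16.G, A16.F, A16.I => true
  | A16.K, A16.H, A16.E, A16.B => true
  | A16.K, A16.O, A16.F, A16.A => true
  | A16.K, A16.P, A16.E, A16.J => true
  | A16.L, A16.G, A16.E, A16.B => true
  | A16.L, A16.H, A16.F, A16.I => true
  | A16.L, A16.O, A16.E, A16.J => true
  | A16.L, A16.P, A16.F, A16.A => true
  | A16.M, A16.B, A16.K, A16.G => true
  | A16.M, A16.B, A16.L, A16.H => true
  | A16.M, A16.J, A16.K, A16.O => true
  | A16.M, A16.J, A16.L, A16.P => true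
  | A16.N, A16.A, A16.K, A16.H => true
  | A16.N, A16.A, A16.L, A16.G => true
  | A16.N, A16.I, A16.K, A16.P => true
  | A16.N, A16.I, A16.L, A16.O => true
  | A16.O, A16.C, A16.A, A16.N => true
  | A16.O, A16.C, A16.J, A16.M => true
  | A16.O, A16.K, A16.A, A16.F => true
  | A16.O, A16.K, A16.I, A16.F => true
  | A16.O, A16.K, A16.J, A16.E => true
  | A16.P, A16.D, A16.A, A16.N => true
  | A16.P, A16.D, A16.J, A16.M => true
  | A16.P, A16.L, A16.A, A16.F => true
  | A16.P, A16.L, A16.I, A16.F => true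
  | A16.P, A16.L, A16.J, A16.E => true
  | _, _, _, _ => false
def fD : A16 → A16 → A16 → A16 → Option (A16 × A16)
  | A16.E, A16.B, A16.C, A16.G => some ((A16.N, A16.I))
  | A16.E, A16.B, A16.C, A16.H => some ((A16.N, A16.A))
  | A16.E, A16.B, A16.D, A16.G => some ((A16.N, A16.A))
  | A16.E, A16.B, A16.D, A16.H => some ((A16.N, A16.I))
  | A16.E, A16.J, A16.C, A16.O => some ((A16.N, A16.A))
  | A16.E, A16.J, A16.C, A16.P => some ((A16.N, A16.I))
  | A16.E, A16.J, A16.D, A16.O => some ((A16.N, A16.I))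
  | A16.E, A16.J, A16.D, A16.P => some ((A16.N, A16.A))
  | A16.F, A16.A, A16.C, A16.H => some ((A16.M, A16.B))
  | A16.F, A16.A, A16.D, A16.G => some ((A16.M, A16.B))
  | A16.F, A16.I, A16.C, A16.P => some ((A16.M, A16.J))
  | A16.F, A16.I, A16.D, A16.O => some ((A16.M, A16.J))
  | A16.M, A16.B, A16.K, A16.G => some ((A16.F, A16.I))
  | A16.M, A16.B, A16.L, A16.H => some ((A16.F, A16.I))
  | A16.M, A16.J, A16.K, A16.O => some ((A16.F, A16.A))
  | A16.M, A16.J, A16.L, A16.P => some ((A16.F, A16.A))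
  | A16.N, A16.A, A16.K, A16.H => some ((A16.E, A16.B))
  | A16.N, A16.A, A16.L, A16.G => some ((A16.E, A16.B))
  | A16.N, A16.I, A16.K, A16.P => some ((A16.E, A16.J))
  | A16.N, A16.I, A16.L, A16.O => some ((A16.E, A16.J))
  | _, _, _, _ => none
def fU11 : A16 → A16 → A16 → A16 → Option (A16 × A16)
  | A16.C, A16.G, A16.N, A16.I => some ((A16.E, A16.B))
  | A16.C, A16.H, A16.M, A16.B => some ((A16.F, A16.A))
  | A16.C, A16.H, A16.N, A16.A => some ((A16.E, A16.B))
  | A16.C, A16.O, A16.N, A16.A => some ((A16.E, A16.J))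
  | A16.C, A16.P, A16.M, A16.J => some ((A16.F, A16.I))
  | A16.C, A16.P, A16.N, A16.I => some ((A16.E, A16.J))
  | A16.D, A16.G, A16.M, A16.B => some ((A16.F, A16.A))
  | A16.D, A16.G, A16.N, A16.A => some ((A16.E, A16.B))
  | A16.D, A16.H, A16.N, A16.I => some ((A16.E, A16.B))
  | A16.D, A16.O, A16.M, A16.J => some ((A16.F, A16.I))
  | A16.D, A16.O, A16.N, A16.I => some ((A16.E, A16.J))
  | A16.D, A16.P, A16.N, A16.A => some ((A16.E, A16.J))
  | A16.K, A16.G, A16.F, A16.I => some ((A16.M, A16.B))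
  | A16.K, A16.H, A16.E, A16.B => some ((A16.N, A16.A))
  | A16.K, A16.O, A16.F, A16.A => some ((A16.M, A16.J))
  | A16.K, A16.P, A16.E, A16.J => some ((A16.N, A16.I))
  | A16.L, A16.G, A16.E, A16.B => some ((A16.N, A16.A))
  | A16.L, A16.H, A16.F, A16.I => some ((A16.M, A16.B))
  | A16.L, A16.O, A16.E, A16.J => some ((A16.N, A16.I))
  | A16.L, A16.P, A16.F, A16.A => some ((A16.M, A16.J))
  | _, _, _, _ => none
def fR : A16 → A16 → A16 → A16 → Option (A16 × A16)
  | A16.E, A16.B, A16.C, A16.G => some ((A16.M, A16.K))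
  | A16.E, A16.B, A16.C, A16.H => some ((A16.M, A16.L))
  | A16.E, A16.B, A16.D, A16.G => some ((A16.M, A16.K))
  | A16.E, A16.B, A16.D, A16.H => some ((A16.M, A16.L))
  | A16.E, A16.J, A16.C, A16.O => some ((A16.M, A16.K))
  | A16.E, A16.J, A16.C, A16.P => some ((A16.M, A16.L))
  | A16.E, A16.J, A16.D, A16.O => some ((A16.M, A16.K))
  | A16.E, A16.J, A16.D, A16.P => some ((A16.M, A16.L))
  | A16.F, A16.A, A16.C, A16.H => some ((A16.N, A16.L))
  | A16.F, A16.A, A16.D, A16.G => some ((A16.N, A16.K))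
  | A16.F, A16.I, A16.C, A16.P => some ((A16.N, A16.L))
  | A16.F, A16.I, A16.D, A16.O => some ((A16.N, A16.K))
  | A16.M, A16.B, A16.K, A16.G => some ((A16.E, A16.C))
  | A16.M, A16.B, A16.L, A16.H => some ((A16.E, A16.D))
  | A16.M, A16.J, A16.K, A16.O => some ((A16.E, A16.C))
  | A16.M, A16.J, A16.L, A16.P => some ((A16.E, A16.D))
  | A16.N, A16.A, A16.K, A16.H => some ((A16.F, A16.D))
  | A16.N, A16.A, A16.L, A16.G => some ((A16.F, A16.C))
  | A16.N, A16.I, A16.K, A16.P => some ((A16.F, A16.D))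
  | A16.N, A16.I, A16.L, A16.O => some ((A16.F, A16.C))
  | _, _, _, _ => none
def fL10 : A16 → A16 → A16 → A16 → Option (A16 × A16)
  | A16.G, A16.C, A16.B, A16.M => some ((A16.L, A16.E))
  | A16.G, A16.C, A16.I, A16.N => some ((A16.K, A16.F))
  | A16.G, A16.K, A16.A, A16.F => some ((A16.D, A16.N))
  | A16.G, A16.K, A16.B, A16.E => some ((A16.D, A16.M))
  | A16.G, A16.K, A16.I, A16.F => some ((A16.C, A16.N))
  | A16.H, A16.D, A16.B, A16.M => some ((A16.K, A16.E))
  | A16.H, A16.D, A16.I, A16.N => some ((A16.L, A16.F))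
  | A16.H, A16.L, A16.A, A16.F => some ((A16.C, A16.N))
  | A16.H, A16.L, A16.B, A16.E => some ((A16.C, A16.M))
  | A16.H, A16.L, A16.I, A16.F => some ((A16.D, A16.N))
  | A16.O, A16.C, A16.A, A16.N => some ((A16.K, A16.F))
  | A16.O, A16.C, A16.J, A16.M => some ((A16.L, A16.E))
  | A16.O, A16.K, A16.A, A16.F => some ((A16.C, A16.N))
  | A16.O, A16.K, A16.I, A16.F => some ((A16.D, A16.N))
  | A16.O, A16.K, A16.J, A16.E => some ((A16.D, A16.M))
  | A16.P, A16.D, A16.A, A16.N => some ((A16.L, A16.F))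
  | A16.P, A16.D, A16.J, A16.M => some ((A16.K, A16.E))
  | A16.P, A16.L, A16.A, A16.F => some ((A16.D, A16.N))
  | A16.P, A16.L, A16.I, A16.F => some ((A16.C, A16.N))
  | A16.P, A16.L, A16.J, A16.E => some ((A16.C, A16.M))
  | _, _, _, _ => none
def fU10 : A16 → A16 → A16 → A16 → Option (A16 × A16)
  | A16.G, A16.C, A16.B, A16.M => some ((A16.A, A16.F))
  | A16.G, A16.C, A16.I, A16.N => some ((A16.B, A16.E))
  | A16.G, A16.K, A16.A, A16.F => some ((A16.B, A16.M))
  | A16.G, A16.K, A16.B, A16.E => some ((A16.A, A16.N))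
  | A16.G, A16.K, A16.I, A16.F => some ((A16.B, A16.M))
  | A16.H, A16.D, A16.B, A16.M => some ((A16.A, A16.F))
  | A16.H, A16.D, A16.I, A16.N => some ((A16.B, A16.E))
  | A16.H, A16.L, A16.A, A16.F => some ((A16.B, A16.M))
  | A16.H, A16.L, A16.B, A16.E => some ((A16.A, A16.N))
  | A16.H, A16.L, A16.I, A16.F => some ((A16.B, A16.M))
  | A16.O, A16.C, A16.A, A16.N => some ((A16.J, A16.E))
  | A16.O, A16.C, A16.J, A16.M => some ((A16.I, A16.F))
  | A16.O, A16.K, A16.A, A16.F => some ((A16.J, A16.M))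
  | A16.O, A16.K, A16.I, A16.F => some ((A16.J, A16.M))
  | A16.O, A16.K, A16.J, A16.E => some ((A16.I, A16.N))
  | A16.P, A16.D, A16.A, A16.N => some ((A16.J, A16.E))
  | A16.P, A16.D, A16.J, A16.M => some ((A16.I, A16.F))
  | A16.P, A16.L, A16.A, A16.F => some ((A16.J, A16.M))
  | A16.P, A16.L, A16.I, A16.F => some ((A16.J, A16.M))
  | A16.P, A16.L, A16.J, A16.E => some ((A16.I, A16.N))
  | _, _, _, _ => none
def fL00 : A16 → A16 → Option (A16)
  | A16.A, A16.F => some (A16.N)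
  | A16.A, A16.N => some (A16.F)
  | A16.B, A16.E => some (A16.M)
  | A16.B, A16.M => some (A16.E)
  | A16.I, A16.F => some (A16.N)
  | A16.I, A16.N => some (A16.F)
  | A16.J, A16.E => some (A16.M)
  | A16.J, A16.M => some (A16.E)
  | _, _ => none
def fCDR : A16 → A16 → A16 → A16 → Option (A16)
  | A16.E, A16.B, A16.C, A16.G => some (A16.F)
  | A16.E, A16.B, A16.C, A16.H => some (A16.F)
  | A16.E, A16.B, A16.D, A16.G => some (A16.F)
  | A16.E, A16.B, A16.D, A16.H => some (A16.F)
  | A16.E, A16.J, A16.C, A16.O => some (A16.F)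
  | A16.E, A16.J, A16.C, A16.P => some (A16.F)
  | A16.E, A16.J, A16.D, A16.O => some (A16.F)
  | A16.E, A16.J, A16.D, A16.P => some (A16.F)
  | A16.F, A16.A, A16.C, A16.H => some (A16.E)
  | A16.F, A16.A, A16.D, A16.G => some (A16.E)
  | A16.F, A16.I, A16.C, A16.P => some (A16.E)
  | A16.F, A16.I, A16.D, A16.O => some (A16.E)
  | A16.M, A16.B, A16.K, A16.G => some (A16.N)
  | A16.M, A16.B, A16.L, A16.H => some (A16.N)
  | A16.M, A16.J, A16.K, A16.O => some (A16.N)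
  | A16.M, A16.J, A16.L, A16.P => some (A16.N)
  | A16.N, A16.A, A16.K, A16.H => some (A16.M)
  | A16.N, A16.A, A16.L, A16.G => some (A16.M)
  | A16.N, A16.I, A16.K, A16.P => some (A16.M)
  | A16.N, A16.I, A16.L, A16.O => some (A16.M)
  | _, _, _, _ => none
def fCUL : A16 → A16 → A16 → A16 → Option (A16)
  | A16.G, A16.C, A16.B, A16.M => some (A16.N)
  | A16.G, A16.C, A16.I, A16.N => some (A16.M)
  | A16.G, A16.K, A16.A, A16.F => some (A16.E)
  | A16.G, A16.K, A16.B, A16.E => some (A16.F)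
  | A16.G, A16.K, A16.I, A16.F => some (A16.E)
  | A16.H, A16.D, A16.B, A16.M => some (A16.N)
  | A16.H, A16.D, A16.I, A16.N => some (A16.M)
  | A16.H, A16.L, A16.A, A16.F => some (A16.E)
  | A16.H, A16.L, A16.B, A16.E => some (A16.F)
  | A16.H, A16.L, A16.I, A16.F => some (A16.E)
  | A16.O, A16.C, A16.A, A16.N => some (A16.M)
  | A16.O, A16.C, A16.J, A16.M => some (A16.N)
  | A16.O, A16.K, A16.A, A16.F => some (A16.E)
  | A16.O, A16.K, A16.I, A16.F => some (A16.E)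
  | A16.O, A16.K, A16.J, A16.E => some (A16.F)
  | A16.P, A16.D, A16.A, A16.N => some (A16.M)
  | A16.P, A16.D, A16.J, A16.M => some (A16.N)
  | A16.P, A16.L, A16.A, A16.F => some (A16.E)
  | A16.P, A16.L, A16.I, A16.F => some (A16.E)
  | A16.P, A16.L, A16.J, A16.E => some (A16.F)
  | _, _, _, _ => none

def hlist : List (A16 × A16) := [(A16.A, A16.F), (A16.A, A16.N), (A16.B, A16.E), (A16.B, A16.M), (A16.C, A16.G), (A16.C, A16.H), (A16.C, A16.O), (A16.C, A16.P), (A16.D, A16.G), (A16.D, A16.H), (A16.D, A16.O), (A16.D, A16.P), (A16.E, A16.B), (A16.E, A16.J), (A16.F, A16.A), (A16.F, A16.I), (A16.G, A16.C), (A16.G, A16.K), (A16.H, A16.D), (A16.H, A16.L), (A16.I, A16.F), (A16.I, A16.N), (A16.J, A16.E), (A16.J, A16.M), (A16.K, A16.G), (A16.K, A16.H), (A16.K, A16.O), (A16.K, A16.P), (A16.L, A16.G), (A16.L, A16.H), (A16.L, A16.O), (A16.L, A16.P), (A16.M, A16.B), (A16.M, A16.J), (A16.N, A16.A), (A16.N,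 A16.I), (A16.O, A16.C), (A16.O, A16.K), (A16.P, A16.D), (A16.P, A16.L)]
def vlist : List (A16 × A16) := [(A16.A, A16.G), (A16.A, A16.H), (A16.B, A16.G), (A16.B, A16.H), (A16.C, A16.M), (A16.C, A16.N), (A16.D, A16.M), (A16.D, A16.N), (A16.E, A16.C), (A16.E, A16.D), (A16.F, A16.C), (A16.F, A16.D), (A16.G, A16.A), (A16.G, A16.B), (A16.G, A16.I), (A16.H, A16.A), (A16.H, A16.B), (A16.H, A16.I), (A16.I, A16.O), (A16.I, A16.P), (A16.J, A16.O), (A16.J, A16.P), (A16.K, A16.E), (A16.K, A16.F), (A16.L, A16.E), (A16.L, A16.F), (A16.M, A16.K), (A16.M, A16.L), (A16.N, A16.K), (A16.N, A16.L), (A16.O, A16.A), (A16.O, A16.I), (A16.O, A16.J), (A16.P, A16.A), (A16.P, A16.I), (A16.P, A16.J)]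
def clist : List (A16 × A16 × A16 × A16) := [(A16.A, A16.F, A16.G, A16.C), (A16.A, A16.F, A16.H, A16.D), (A16.A, A16.N, A16.G, A16.K), (A16.A, A16.N, A16.H, A16.L), (A16.B, A16.E, A16.G, A16.C), (A16.B, A16.E, A16.H, A16.D), (A16.B, A16.M, A16.G, A16.K), (A16.B, A16.M, A16.H, A16.L), (A16.C, A16.G, A16.N, A16.I), (A16.C, A16.H, A16.M, A16.B), (A16.C, A16.H, A16.N, A16.A), (A16.C, A16.O, A16.N, A16.A), (A16.C, A16.P, A16.M, A16.J), (A16.C, A16.P, A16.N, A16.I), (A16.D, A16.G, A16.M, A16.B), (A16.D, A16.G, A16.N, A16.A), (A16.D, A16.H, A16.N, A16.I), (A16.D, A16.O, A16.M, A16.J), (A16.D, A16.O, A16.N, A16.I), (A16.D, A16.P, A16.N, A16.A), (A16.E, A16.B, A16.C, A16.G), (A16.E, A16.B, A16.C, A16.H), (A16.E, A16.B, A16.D, A16.G), (A16.E, A16.B, A16.D, A16.H), (A16.E, A16.J, A16.C, A16.O), (A16.E, A16.J, A16.C, A16.P), (A16.E, A16.J, A16.D, A16.O), (A16.E, A16.J,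 A16.D, A16.P), (A16.F, A16.A, A16.C, A16.H), (A16.F, A16.A, A16.D, A16.G), (A16.F, A16.I, A16.C, A16.P), (A16.F, A16.I, A16.D, A16.O), (A16.G, A16.C, A16.B, A16.M), (A16.G, A16.C, A16.I, A16.N), (A16.G, A16.K, A16.A, A16.F), (A16.G, A16.K, A16.B, A16.E), (A16.G, A16.K, A16.I, A16.F), (A16.H, A16.D, A16.B, A16.M), (A16.H, A16.D, A16.I, A16.N), (A16.H, A16.L, A16.A, A16.F), (A16.H, A16.L, A16.B, A16.E), (A16.H, A16.L, A16.I, A16.F), (A16.I, A16.F, A16.O, A16.C), (A16.I, A16.F, A16.P, A16.D), (A16.I, A16.N, A16.O, A16.K), (A16.I, A16.N, A16.P, A16.L), (A16.J, A16.E, A16.O, A16.C), (A16.J, A16.E, A16.P, A16.D), (A16.J, A16.M, A16.O, A16.K), (A16.J, A16.M, A16.P, A16.L), (A16.K, A16.G, A16.F, A16.I), (A16.K, A16.H, A16.E, A16.B), (A16.K, A16.O, A16.F, A16.A), (A16.K, A16.P, A16.E, A16.J), (A16.L, A16.G, A16.E, A16.B), (A16.L, A16.H, A16.F, A16.I), (A16.L,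 A16.O, A16.E, A16.J), (A16.L, A16.P, A16.F, A16.A), (A16.M, A16.B, A16.K, A16.G), (A16.M, A16.B, A16.L, A16.H), (A16.M, A16.J, A16.K, A16.O), (A16.M, A16.J, A16.L, A16.P), (A16.N, A16.A, A16.K, A16.H), (A16.N, A16.A, A16.L, A16.G), (A16.N, A16.I, A16.K, A16.P), (A16.N, A16.I, A16.L, A16.O), (A16.O, A16.C, A16.A, A16.N), (A16.O, A16.C, A16.J, A16.M), (A16.O, A16.K, A16.A, A16.F), (A16.O, A16.K, A16.I, A16.F), (A16.O, A16.K, A16.J, A16.E), (A16.P, A16.D, A16.A, A16.N), (A16.P, A16.D, A16.J, A16.M), (A16.P, A16.L, A16.A, A16.F), (A16.P, A16.L, A16.I, A16.F), (A16.P, A16.L, A16.J, A16.E)]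
def a16l : List A16 := [.A,.B,.C,.D,.E,.F,.G,.H,.I,.J,.K,.L,.M,.N,.O,.P]
lemma a16_mem : ∀ x : A16, x ∈ a16l := by intro x; cases x <;> decide

set_option maxHeartbeats 1000000 in
lemma mu_eq_muv : ∀ (x : A16) (i j : Fin 2), mu x i j = muv x i j := by decide

lemma ball_of_all {α : Type} [BEq α] {l : List α} {p : α → Bool} (h : l.all p = true) :
    ∀ x ∈ l, p x = true := List.all_eq_true.mp h
lemma mem_of_elem {α : Type} [BEq α] [LawfulBEq α] {l : List α} {a : α} (h : l.elem a = true) :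
    a ∈ l := by rwa [List.elem_iff] at h

lemma cl_h_seed : ∀ x ∈ a16l, ∀ i : Fin 2, (muv x i 0, muv x i 1) ∈ hlist := by
  have h := ball_of_all (l := a16l)
    (p := fun x => List.elem (muv x 0 0, muv x 0 1) hlist && List.elem (muv x 1 0, muv x 1 1) hlist)
    (by decide)
  intro x hx i
  have := h x hx
  fin_cases i
  · exact mem_of_elem (by simp_all)
  · exact mem_of_elem (by simp_all)

lemma cl_h_step : ∀ p ∈ hlist, ∀ i : Fin 2, (muv p.1 i 1, muv p.2 i 0) ∈ hlist := by
  have h := ball_of_all (l := hlist)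
    (p := fun p => List.elem (muv p.1 0 1, muv p.2 0 0) hlist && List.elem (muv p.1 1 1, muv p.2 1 0) hlist)
    (by decide)
  intro p hp i
  have := h p hp
  fin_cases i
  · exact mem_of_elem (by simp_all)
  · exact mem_of_elem (by simp_all)

lemma cl_v_seed : ∀ x ∈ a16l, ∀ j : Fin 2, (muv x 0 j, muv x 1 j) ∈ vlist := by
  have h := ball_of_all (l := a16l)
    (p := fun x => List.elem (muv x 0 0, muv x 1 0) vlist && List.elem (muv x 0 1, muv x 1 1) vlist)
    (by decide)
  intro x hx j
  have := h x hx
  fin_cases j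
  · exact mem_of_elem (by simp_all)
  · exact mem_of_elem (by simp_all)

lemma cl_v_step : ∀ p ∈ vlist, ∀ j : Fin 2, (muv p.1 1 j, muv p.2 0 j) ∈ vlist := by
  have h := ball_of_all (l := vlist)
    (p := fun p => List.elem (muv p.1 1 0, muv p.2 0 0) vlist && List.elem (muv p.1 1 1, muv p.2 0 1) vlist)
    (by decide)
  intro p hp j
  have := h p hp
  fin_cases j
  · exact mem_of_elem (by simp_all)
  · exact mem_of_elem (by simp_all)

lemma cl_c_letter : ∀ x ∈ a16l, (muv x 0 0, muv x 0 1, muv x 1 0, muv x 1 1) ∈ clist := by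
  have h := ball_of_all (l := a16l)
    (p := fun x => List.elem (muv x 0 0, muv x 0 1, muv x 1 0, muv x 1 1) clist) (by decide)
  exact fun x hx => mem_of_elem (h x hx)

lemma cl_c_h : ∀ p ∈ hlist, (muv p.1 0 1, muv p.2 0 0, muv p.1 1 1, muv p.2 1 0) ∈ clist := by
  have h := ball_of_all (l := hlist)
    (p := fun p => List.elem (muv p.1 0 1, muv p.2 0 0, muv p.1 1 1, muv p.2 1 0) clist) (by decide)
  exact fun p hp => mem_of_elem (h p hp)

lemma cl_c_v : ∀ p ∈ vlist, (muv p.1 1 0, muv p.1 1 1, muv p.2 0 0, muv p.2 0 1) ∈ clist := by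
  have h := ball_of_all (l := vlist)
    (p := fun p => List.elem (muv p.1 1 0, muv p.1 1 1, muv p.2 0 0, muv p.2 0 1) clist) (by decide)
  exact fun p hp => mem_of_elem (h p hp)

lemma cl_c_c : ∀ w ∈ clist, (muv w.1 1 1, muv w.2.1 1 0, muv w.2.2.1 0 1, muv w.2.2.2 0 0) ∈ clist := by
  have h := ball_of_all (l := clist)
    (p := fun w => List.elem (muv w.1 1 1, muv w.2.1 1 0, muv w.2.2.1 0 1, muv w.2.2.2 0 0) clist)
    (by decide)
  exact fun w hw => mem_of_elem (h w hw)

lemma fD_ok : ∀ w ∈ clist, fD (muv w.1 0 1) (muv w.2.1 0 0) (muv w.1 1 1) (muv w.2.1 1 0)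
    = some (muv w.2.2.1 0 1, muv w.2.2.2 0 0) := by
  have h := ball_of_all (l := clist)
    (p := fun w => fD (muv w.1 0 1) (muv w.2.1 0 0) (muv w.1 1 1) (muv w.2.1 1 0)
      == some (muv w.2.2.1 0 1, muv w.2.2.2 0 0)) (by decide)
  exact fun w hw => eq_of_beq (h w hw)

lemma fU11_ok : ∀ w ∈ clist, fU11 (muv w.1 1 1) (muv w.2.1 1 0) (muv w.2.2.1 0 1) (muv w.2.2.2 0 0)
    = some (muv w.1 0 1, muv w.2.1 0 0) := by
  have h := ball_of_all (l := clist)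
    (p := fun w => fU11 (muv w.1 1 1) (muv w.2.1 1 0) (muv w.2.2.1 0 1) (muv w.2.2.2 0 0)
      == some (muv w.1 0 1, muv w.2.1 0 0)) (by decide)
  exact fun w hw => eq_of_beq (h w hw)

lemma fR_ok : ∀ p ∈ hlist, fR (muv p.1 0 1) (muv p.2 0 0) (muv p.1 1 1) (muv p.2 1 0)
    = some (muv p.2 0 1, muv p.2 1 1) := by
  have h := ball_of_all (l := hlist)
    (p := fun p => fR (muv p.1 0 1) (muv p.2 0 0) (muv p.1 1 1) (muv p.2 1 0)
      == some (muv p.2 0 1, muv p.2 1 1)) (by decide)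
  exact fun p hp => eq_of_beq (h p hp)

lemma fL10_ok : ∀ w ∈ clist, fL10 (muv w.2.1 1 0) (muv w.2.1 1 1) (muv w.2.2.2 0 0) (muv w.2.2.2 0 1)
    = some (muv w.1 1 1, muv w.2.2.1 0 1) := by
  have h := ball_of_all (l := clist)
    (p := fun w => fL10 (muv w.2.1 1 0) (muv w.2.1 1 1) (muv w.2.2.2 0 0) (muv w.2.2.2 0 1)
      == some (muv w.1 1 1, muv w.2.2.1 0 1)) (by decide)
  exact fun w hw => eq_of_beq (h w hw)

lemma fU10_ok : ∀ p ∈ vlist, fU10 (muv p.1 1 0) (muv p.1 1 1) (muv p.2 0 0) (muv p.2 0 1)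
    = some (muv p.1 0 0, muv p.1 0 1) := by
  have h := ball_of_all (l := vlist)
    (p := fun p => fU10 (muv p.1 1 0) (muv p.1 1 1) (muv p.2 0 0) (muv p.2 0 1)
      == some (muv p.1 0 0, muv p.1 0 1)) (by decide)
  exact fun p hp => eq_of_beq (h p hp)

lemma fL00_ok : ∀ p ∈ hlist, fL00 (muv p.2 0 0) (muv p.2 0 1) = some (muv p.1 0 1) := by
  have h := ball_of_all (l := hlist)
    (p := fun p => fL00 (muv p.2 0 0) (muv p.2 0 1) == some (muv p.1 0 1)) (by decide)
  exact fun p hp => eq_of_beq (h p hp)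

lemma fCDR_ok : ∀ w ∈ clist, fCDR (muv w.1 0 1) (muv w.2.1 0 0) (muv w.1 1 1) (muv w.2.1 1 0)
    = some (muv w.2.2.2 0 1) := by
  have h := ball_of_all (l := clist)
    (p := fun w => fCDR (muv w.1 0 1) (muv w.2.1 0 0) (muv w.1 1 1) (muv w.2.1 1 0)
      == some (muv w.2.2.2 0 1)) (by decide)
  exact fun w hw => eq_of_beq (h w hw)

lemma fCUL_ok : ∀ w ∈ clist, fCUL (muv w.2.1 1 0) (muv w.2.1 1 1) (muv w.2.2.2 0 0) (muv w.2.2.2 0 1)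
    = some (muv w.1 0 1) := by
  have h := ball_of_all (l := clist)
    (p := fun w => fCUL (muv w.2.1 1 0) (muv w.2.1 1 1) (muv w.2.2.2 0 0) (muv w.2.2.2 0 1)
      == some (muv w.1 0 1)) (by decide)
  exact fun w hw => eq_of_beq (h w hw)
lemma Tfun_entry (k r c i j : ℕ) (hi : i < 2) (hj : j < 2) (hr : r % 2 = i) (hc : c % 2 = j) :
    Tfun (k+1) r c = muv (Tfun k (r/2) (c/2)) ⟨i, hi⟩ ⟨j, hj⟩ := by
  rw [Tfun_succ, muE_eval _ r c i j hi hj hr hc, mu_eq_muv]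

lemma pow_zero_two : (2:ℕ)^0 = 1 := rfl

lemma Wh : ∀ k r c, r < 2^k → c + 2 ≤ 2^k → (Tfun k r c, Tfun k r (c+1)) ∈ hlist := by
  intro k
  induction k with
  | zero => intro r c _ hc; rw [pow_zero_two] at hc; omega
  | succ k ih =>
    intro r c hr hc
    have h2 : 2^(k+1) = 2*2^k := two_pow_succ k
    rcases Nat.mod_two_eq_zero_or_one c with hc0 | hc1
    · have d1 : (c+1)/2 = c/2 := by omega
      rw [Tfun_entry k r c (r % 2) 0 (by omega) (by omega) rfl hc0,
          Tfun_entry k r (c+1) (r % 2) 1 (by omega) (by omega) rfl (by omega), d1]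
      exact cl_h_seed _ (a16_mem _) ⟨r % 2, by omega⟩
    · have d1 : (c+1)/2 = c/2 + 1 := by omega
      have hp := ih (r/2) (c/2) (by omega) (by omega)
      rw [Tfun_entry k r c (r % 2) 1 (by omega) (by omega) rfl hc1,
          Tfun_entry k r (c+1) (r % 2) 0 (by omega) (by omega) rfl (by omega), d1]
      exact cl_h_step _ hp ⟨r % 2, by omega⟩

lemma Wv : ∀ k r c, r + 2 ≤ 2^k → c < 2^k → (Tfun k r c, Tfun k (r+1) c) ∈ vlist := by
  intro k
  induction k with
  | zero => intro r c hr _; rw [pow_zero_two] at hr; omega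
  | succ k ih =>
    intro r c hr hc
    have h2 : 2^(k+1) = 2*2^k := two_pow_succ k
    rcases Nat.mod_two_eq_zero_or_one r with hr0 | hr1
    · have d1 : (r+1)/2 = r/2 := by omega
      rw [Tfun_entry k r c 0 (c % 2) (by omega) (by omega) hr0 rfl,
          Tfun_entry k (r+1) c 1 (c % 2) (by omega) (by omega) (by omega) rfl, d1]
      exact cl_v_seed _ (a16_mem _) ⟨c % 2, by omega⟩
    · have d1 : (r+1)/2 = r/2 + 1 := by omega
      have hp := ih (r/2) (c/2) (by omega) (by omega)
      rw [Tfun_entry k r c 1 (c % 2) (by omega) (by omega) hr1 rfl,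
          Tfun_entry k (r+1) c 0 (c % 2) (by omega) (by omega) (by omega) rfl, d1]
      exact cl_v_step _ hp ⟨c % 2, by omega⟩

lemma Wc : ∀ k r c, r + 2 ≤ 2^k → c + 2 ≤ 2^k →
    (Tfun k r c, Tfun k r (c+1), Tfun k (r+1) c, Tfun k (r+1) (c+1)) ∈ clist := by
  intro k
  induction k with
  | zero => intro r c hr _; rw [pow_zero_two] at hr; omega
  | succ k ih =>
    intro r c hr hc
    have h2 : 2^(k+1) = 2*2^k := two_pow_succ k
    rcases Nat.mod_two_eq_zero_or_one r with hr0 | hr1 <;>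
      rcases Nat.mod_two_eq_zero_or_one c with hc0 | hc1
    · have d1 : (r+1)/2 = r/2 := by omega
      have d2 : (c+1)/2 = c/2 := by omega
      rw [Tfun_entry k r c 0 0 (by omega) (by omega) hr0 hc0,
          Tfun_entry k r (c+1) 0 1 (by omega) (by omega) hr0 (by omega),
          Tfun_entry k (r+1) c 1 0 (by omega) (by omega) (by omega) hc0,
          Tfun_entry k (r+1) (c+1) 1 1 (by omega) (by omega) (by omega) (by omega), d1, d2]
      exact cl_c_letter _ (a16_mem _)
    · have d1 : (r+1)/2 = r/2 := by omega
      have d2 : (c+1)/2 = c/2 + 1 := by omega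
      have hp := Wh k (r/2) (c/2) (by omega) (by omega)
      rw [Tfun_entry k r c 0 1 (by omega) (by omega) hr0 hc1,
          Tfun_entry k r (c+1) 0 0 (by omega) (by omega) hr0 (by omega),
          Tfun_entry k (r+1) c 1 1 (by omega) (by omega) (by omega) hc1,
          Tfun_entry k (r+1) (c+1) 1 0 (by omega) (by omega) (by omega) (by omega), d1, d2]
      exact cl_c_h _ hp
    · have d1 : (r+1)/2 = r/2 + 1 := by omega
      have d2 : (c+1)/2 = c/2 := by omega
      have hp := Wv k (r/2) (c/2) (by omega) (by omega)
      rw [Tfun_entry k r c 1 0 (by omega) (by omega) hr1 hc0,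
          Tfun_entry k r (c+1) 1 1 (by omega) (by omega) hr1 (by omega),
          Tfun_entry k (r+1) c 0 0 (by omega) (by omega) (by omega) hc0,
          Tfun_entry k (r+1) (c+1) 0 1 (by omega) (by omega) (by omega) (by omega), d1, d2]
      exact cl_c_v _ hp
    · have d1 : (r+1)/2 = r/2 + 1 := by omega
      have d2 : (c+1)/2 = c/2 + 1 := by omega
      have hp := ih (r/2) (c/2) (by omega) (by omega)
      rw [Tfun_entry k r c 1 1 (by omega) (by omega) hr1 hc1,
          Tfun_entry k r (c+1) 1 0 (by omega) (by omega) hr1 (by omega),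
          Tfun_entry k (r+1) c 0 1 (by omega) (by omega) (by omega) hc1,
          Tfun_entry k (r+1) (c+1) 0 0 (by omega) (by omega) (by omega) (by omega), d1, d2]
      exact cl_c_c _ hp
lemma TD (k r c : ℕ) (hr : r % 2 = 0) (hc : c % 2 = 1)
    (hrb : r + 3 ≤ 2^(k+1)) (hcb : c + 2 ≤ 2^(k+1)) :
    fD (Tfun (k+1) r c) (Tfun (k+1) r (c+1)) (Tfun (k+1) (r+1) c) (Tfun (k+1) (r+1) (c+1))
      = some (Tfun (k+1) (r+2) c, Tfun (k+1) (r+2) (c+1)) := by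
  have h2 : 2^(k+1) = 2*2^k := two_pow_succ k
  have d1 : (c+1)/2 = c/2 + 1 := by omega
  have d2 : (r+1)/2 = r/2 := by omega
  have d3 : (r+2)/2 = r/2 + 1 := by omega
  have hw := Wc k (r/2) (c/2) (by omega) (by omega)
  rw [Tfun_entry k r c 0 1 (by omega) (by omega) hr hc,
      Tfun_entry k r (c+1) 0 0 (by omega) (by omega) hr (by omega),
      Tfun_entry k (r+1) c 1 1 (by omega) (by omega) (by omega) hc,
      Tfun_entry k (r+1) (c+1) 1 0 (by omega) (by omega) (by omega) (by omega),
      Tfun_entry k (r+2) c 0 1 (by omega) (by omega) (by omega) hc,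
      Tfun_entry k (r+2) (c+1) 0 0 (by omega) (by omega) (by omega) (by omega),
      d1, d2, d3]
  exact fD_ok _ hw

lemma TU11 (k r c : ℕ) (hr : r % 2 = 0) (hc : c % 2 = 1)
    (hrb : r + 3 ≤ 2^(k+1)) (hcb : c + 2 ≤ 2^(k+1)) :
    fU11 (Tfun (k+1) (r+1) c) (Tfun (k+1) (r+1) (c+1)) (Tfun (k+1) (r+2) c) (Tfun (k+1) (r+2) (c+1))
      = some (Tfun (k+1) r c, Tfun (k+1) r (c+1)) := by
  have h2 : 2^(k+1) = 2*2^k := two_pow_succ k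
  have d1 : (c+1)/2 = c/2 + 1 := by omega
  have d2 : (r+1)/2 = r/2 := by omega
  have d3 : (r+2)/2 = r/2 + 1 := by omega
  have hw := Wc k (r/2) (c/2) (by omega) (by omega)
  rw [Tfun_entry k r c 0 1 (by omega) (by omega) hr hc,
      Tfun_entry k r (c+1) 0 0 (by omega) (by omega) hr (by omega),
      Tfun_entry k (r+1) c 1 1 (by omega) (by omega) (by omega) hc,
      Tfun_entry k (r+1) (c+1) 1 0 (by omega) (by omega) (by omega) (by omega),
      Tfun_entry k (r+2) c 0 1 (by omega) (by omega) (by omega) hc,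
      Tfun_entry k (r+2) (c+1) 0 0 (by omega) (by omega) (by omega) (by omega),
      d1, d2, d3]
  exact fU11_ok _ hw

lemma TR (k r c : ℕ) (hr : r % 2 = 0) (hc : c % 2 = 1)
    (hrb : r + 2 ≤ 2^(k+1)) (hcb : c + 3 ≤ 2^(k+1)) :
    fR (Tfun (k+1) r c) (Tfun (k+1) r (c+1)) (Tfun (k+1) (r+1) c) (Tfun (k+1) (r+1) (c+1))
      = some (Tfun (k+1) r (c+2), Tfun (k+1) (r+1) (c+2)) := by
  have h2 : 2^(k+1) = 2*2^k := two_pow_succ k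
  have d1 : (c+1)/2 = c/2 + 1 := by omega
  have d2 : (r+1)/2 = r/2 := by omega
  have d3 : (c+2)/2 = c/2 + 1 := by omega
  have hp := Wh k (r/2) (c/2) (by omega) (by omega)
  rw [Tfun_entry k r c 0 1 (by omega) (by omega) hr hc,
      Tfun_entry k r (c+1) 0 0 (by omega) (by omega) hr (by omega),
      Tfun_entry k (r+1) c 1 1 (by omega) (by omega) (by omega) hc,
      Tfun_entry k (r+1) (c+1) 1 0 (by omega) (by omega) (by omega) (by omega),
      Tfun_entry k r (c+2) 0 1 (by omega) (by omega) hr (by omega),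
      Tfun_entry k (r+1) (c+2) 1 1 (by omega) (by omega) (by omega) (by omega),
      d1, d2, d3]
  exact fR_ok _ hp

lemma TL10 (k r c : ℕ) (hr : r % 2 = 1) (hc : c % 2 = 1)
    (hrb : r + 2 ≤ 2^(k+1)) (hcb : c + 3 ≤ 2^(k+1)) :
    fL10 (Tfun (k+1) r (c+1)) (Tfun (k+1) r (c+2)) (Tfun (k+1) (r+1) (c+1)) (Tfun (k+1) (r+1) (c+2))
      = some (Tfun (k+1) r c, Tfun (k+1) (r+1) c) := by
  have h2 : 2^(k+1) = 2*2^k := two_pow_succ k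
  have d1 : (c+1)/2 = c/2 + 1 := by omega
  have d2 : (r+1)/2 = r/2 + 1 := by omega
  have d3 : (c+2)/2 = c/2 + 1 := by omega
  have hw := Wc k (r/2) (c/2) (by omega) (by omega)
  rw [Tfun_entry k r c 1 1 (by omega) (by omega) hr hc,
      Tfun_entry k r (c+1) 1 0 (by omega) (by omega) hr (by omega),
      Tfun_entry k r (c+2) 1 1 (by omega) (by omega) hr (by omega),
      Tfun_entry k (r+1) c 0 1 (by omega) (by omega) (by omega) hc,
      Tfun_entry k (r+1) (c+1) 0 0 (by omega) (by omega) (by omega) (by omega),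
      Tfun_entry k (r+1) (c+2) 0 1 (by omega) (by omega) (by omega) (by omega),
      d1, d2, d3]
  exact fL10_ok _ hw

lemma TU10 (k r c : ℕ) (hr : r % 2 = 0) (hc : c % 2 = 0)
    (hrb : r + 3 ≤ 2^(k+1)) (hcb : c + 2 ≤ 2^(k+1)) :
    fU10 (Tfun (k+1) (r+1) c) (Tfun (k+1) (r+1) (c+1)) (Tfun (k+1) (r+2) c) (Tfun (k+1) (r+2) (c+1))
      = some (Tfun (k+1) r c, Tfun (k+1) r (c+1)) := by
  have h2 : 2^(k+1) = 2*2^k := two_pow_succ k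
  have d1 : (c+1)/2 = c/2 := by omega
  have d2 : (r+1)/2 = r/2 := by omega
  have d3 : (r+2)/2 = r/2 + 1 := by omega
  have hp := Wv k (r/2) (c/2) (by omega) (by omega)
  rw [Tfun_entry k r c 0 0 (by omega) (by omega) hr hc,
      Tfun_entry k r (c+1) 0 1 (by omega) (by omega) hr (by omega),
      Tfun_entry k (r+1) c 1 0 (by omega) (by omega) (by omega) hc,
      Tfun_entry k (r+1) (c+1) 1 1 (by omega) (by omega) (by omega) (by omega),
      Tfun_entry k (r+2) c 0 0 (by omega) (by omega) (by omega) hc,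
      Tfun_entry k (r+2) (c+1) 0 1 (by omega) (by omega) (by omega) (by omega),
      d1, d2, d3]
  exact fU10_ok _ hp

lemma TL00 (k r c : ℕ) (hr : r % 2 = 0) (hc : c % 2 = 1)
    (hrb : r + 1 ≤ 2^(k+1)) (hcb : c + 3 ≤ 2^(k+1)) :
    fL00 (Tfun (k+1) r (c+1)) (Tfun (k+1) r (c+2)) = some (Tfun (k+1) r c) := by
  have h2 : 2^(k+1) = 2*2^k := two_pow_succ k
  have d1 : (c+1)/2 = c/2 + 1 := by omega
  have d3 : (c+2)/2 = c/2 + 1 := by omega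
  have hp := Wh k (r/2) (c/2) (by omega) (by omega)
  rw [Tfun_entry k r c 0 1 (by omega) (by omega) hr hc,
      Tfun_entry k r (c+1) 0 0 (by omega) (by omega) hr (by omega),
      Tfun_entry k r (c+2) 0 1 (by omega) (by omega) hr (by omega),
      d1, d3]
  exact fL00_ok _ hp

lemma TCDR (k r c : ℕ) (hr : r % 2 = 0) (hc : c % 2 = 1)
    (hrb : r + 3 ≤ 2^(k+1)) (hcb : c + 3 ≤ 2^(k+1)) :
    fCDR (Tfun (k+1) r c) (Tfun (k+1) r (c+1)) (Tfun (k+1) (r+1) c) (Tfun (k+1) (r+1) (c+1))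
      = some (Tfun (k+1) (r+2) (c+2)) := by
  have h2 : 2^(k+1) = 2*2^k := two_pow_succ k
  have d1 : (c+1)/2 = c/2 + 1 := by omega
  have d2 : (r+1)/2 = r/2 := by omega
  have d3 : (r+2)/2 = r/2 + 1 := by omega
  have d4 : (c+2)/2 = c/2 + 1 := by omega
  have hw := Wc k (r/2) (c/2) (by omega) (by omega)
  rw [Tfun_entry k r c 0 1 (by omega) (by omega) hr hc,
      Tfun_entry k r (c+1) 0 0 (by omega) (by omega) hr (by omega),
      Tfun_entry k (r+1) c 1 1 (by omega) (by omega) (by omega) hc,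
      Tfun_entry k (r+1) (c+1) 1 0 (by omega) (by omega) (by omega) (by omega),
      Tfun_entry k (r+2) (c+2) 0 1 (by omega) (by omega) (by omega) (by omega),
      d1, d2, d3, d4]
  exact fCDR_ok _ hw

lemma TCUL (k r c : ℕ) (hr : r % 2 = 0) (hc : c % 2 = 1)
    (hrb : r + 3 ≤ 2^(k+1)) (hcb : c + 3 ≤ 2^(k+1)) :
    fCUL (Tfun (k+1) (r+1) (c+1)) (Tfun (k+1) (r+1) (c+2)) (Tfun (k+1) (r+2) (c+1)) (Tfun (k+1) (r+2) (c+2))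
      = some (Tfun (k+1) r c) := by
  have h2 : 2^(k+1) = 2*2^k := two_pow_succ k
  have d1 : (c+1)/2 = c/2 + 1 := by omega
  have d2 : (r+1)/2 = r/2 := by omega
  have d3 : (r+2)/2 = r/2 + 1 := by omega
  have d4 : (c+2)/2 = c/2 + 1 := by omega
  have hw := Wc k (r/2) (c/2) (by omega) (by omega)
  rw [Tfun_entry k r c 0 1 (by omega) (by omega) hr hc,
      Tfun_entry k (r+1) (c+1) 1 0 (by omega) (by omega) (by omega) (by omega),
      Tfun_entry k (r+1) (c+2) 1 1 (by omega) (by omega) (by omega) (by omega),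
      Tfun_entry k (r+2) (c+1) 0 0 (by omega) (by omega) (by omega) (by omega),
      Tfun_entry k (r+2) (c+2) 0 1 (by omega) (by omega) (by omega) (by omega),
      d1, d2, d3, d4]
  exact fCUL_ok _ hw
def Occ (p q m n : ℕ) (pat : Pat A16 m n) (o : ℕ × ℕ × ℕ) : Prop :=
  o.2.1 % 2 = p ∧ o.2.2 % 2 = q ∧ o.2.1 + m ≤ 2 ^ o.1 ∧ o.2.2 + n ≤ 2 ^ o.1 ∧
    ∀ (a : Fin m) (b : Fin n), pat a b = Tfun o.1 (o.2.1 + a) (o.2.2 + b)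

def Par (p q m n : ℕ) : Set (Pat A16 m n) := { pat | ∃ o, Occ p q m n pat o }

lemma par_emb {p q m n : ℕ} {pat : Pat A16 m n} (hm : 2 ≤ m) (h : pat ∈ Par p q m n) :
    ∃ k R C : ℕ, R % 2 = p ∧ C % 2 = q ∧ R + m + 3 ≤ 2^(k+1) ∧ C + n + 3 ≤ 2^(k+1) ∧
      3 ≤ R ∧ 3 ≤ C ∧ R/2 + m + 1 ≤ 2^k ∧ C/2 + n + 1 ≤ 2^k ∧
      ∀ (a : Fin m) (b : Fin n), pat a b = Tfun (k+1) (R + a) (C + b) := by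
  obtain ⟨⟨k0, r, c⟩, hp, hq, hrb, hcb, hent⟩ := h
  simp only at hp hq hrb hcb hent
  obtain ⟨k1, rfl⟩ : ∃ k1, k0 = k1 + 1 := by
    rcases Nat.eq_zero_or_pos k0 with rfl | hk
    · rw [pow_zero_two] at hrb; omega
    · exact ⟨k0 - 1, by omega⟩
  set k0 := k1 + 1
  have ht2 : 2^k0 = 2 * 2^k1 := two_pow_succ k1
  have ht1 : 1 ≤ 2^k1 := Nat.one_le_two_pow
  have h8 : 2^(k0+3) = 8 * 2^k0 := by rw [pow_add]; ring
  refine ⟨k0 + 2, 4*2^k0 + r, 3*2^k0 + c, by omega, by omega, ?_, ?_, by omega, by omega, ?_, ?_, ?_⟩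
  · show 4*2^k0 + r + m + 3 ≤ 2^(k0+3); omega
  · show 3*2^k0 + c + n + 3 ≤ 2^(k0+3); omega
  · show (4*2^k0 + r)/2 + m + 1 ≤ 2^(k0+2)
    have h4 : 2^(k0+2) = 4 * 2^k0 := by rw [pow_add]; ring
    omega
  · show (3*2^k0 + c)/2 + n + 1 ≤ 2^(k0+2)
    have h4 : 2^(k0+2) = 4 * 2^k0 := by rw [pow_add]; ring
    omega
  · intro a b
    have ha : (a:ℕ) < m := a.isLt
    have hb : (b:ℕ) < n := b.isLt
    have e := Tfun_embed k0 (r + a) (c + b) (by omega) (by omega)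
    rw [hent a b, ← e]
    show Tfun (k0+3) _ _ = _
    congr 1 <;> omega

lemma Pij_eq_Par (i j m n : ℕ) (hi1 : 1 ≤ i) (hi2 : i ≤ 2) (hj1 : 1 ≤ j) (hj2 : j ≤ 2)
    (hm : 2 ≤ m) (hn : 2 ≤ n) :
    Pij i j m n = Par (i-1) (j-1) m n := by
  have hm0 : 0 < m := by omega
  have hn0 : 0 < n := by omega
  ext pat
  constructor
  · rintro ⟨x, hxPT, hpat⟩
    rw [PT, Set.mem_iUnion] at hxPT
    obtain ⟨k, r, c, hrb, hcb, hx⟩ := hxPT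
    have h2 : 2^(k+1) = 2*2^k := two_pow_succ k
    refine ⟨(k+1, 2*r + (i-1), 2*c + (j-1)), by simp only; omega, by simp only; omega,
      by simp only; omega, by simp only; omega, ?_⟩
    intro a b
    simp only
    have ha : (a:ℕ) < m := a.isLt
    have hb : (b:ℕ) < n := b.isLt
    rw [hpat a b]
    simp only [muPatE, dif_pos hm0, dif_pos hn0]
    set u := i - 1 + (a:ℕ) with hu_def
    set v := j - 1 + (b:ℕ) with hv_def
    have hu : u/2 % m = u/2 := Nat.mod_eq_of_lt (by omega)
    have hv : v/2 % n = v/2 := Nat.mod_eq_of_lt (by omega)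
    have e1 : x ⟨u/2 % m, Nat.mod_lt _ hm0⟩ ⟨v/2 % n, Nat.mod_lt _ hn0⟩
        = Tfun k (r + u/2) (c + v/2) := by
      rw [hx]
      show Tfun k (r + u/2 % m) (c + v/2 % n) = _
      rw [hu, hv]
    rw [e1, Tfun_succ]
    have i1 : (2*r + (i-1) + (a:ℕ))/2 = r + u/2 := by omega
    have i2 : (2*c + (j-1) + (b:ℕ))/2 = c + v/2 := by omega
    rw [i1, i2]
    exact muE_congr _ u v _ _ (by omega) (by omega)
  · intro h
    obtain ⟨k, R, C, hp, hq, hrb, hcb, hR3, hC3, hrb2, hcb2, hent⟩ := par_emb hm h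
    refine ⟨fun a b => Tfun k (R/2 + a) (C/2 + b), ?_, ?_⟩
    · rw [PT, Set.mem_iUnion]
      exact ⟨k, R/2, C/2, by omega, by omega, fun a b => rfl⟩
    · intro a b
      have ha : (a:ℕ) < m := a.isLt
      have hb : (b:ℕ) < n := b.isLt
      rw [hent a b]
      simp only [muPatE, dif_pos hm0, dif_pos hn0]
      set u := i - 1 + (a:ℕ) with hu_def
      set v := j - 1 + (b:ℕ) with hv_def
      have hu : u/2 % m = u/2 := Nat.mod_eq_of_lt (by omega)
      have hv : v/2 % n = v/2 := Nat.mod_eq_of_lt (by omega)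
      show Tfun (k+1) (R + (a:ℕ)) (C + (b:ℕ)) = muE (Tfun k (R/2 + u/2 % m) (C/2 + v/2 % n)) u v
      rw [hu, hv, Tfun_succ]
      have i1 : (R + (a:ℕ))/2 = R/2 + u/2 := by omega
      have i2 : (C + (b:ℕ))/2 = C/2 + v/2 := by omega
      rw [i1, i2]
      exact muE_congr _ _ _ u v (by omega) (by omega)
def GOcc (p q m n : ℕ) (pat : Pat A16 m n) (k R C : ℕ) : Prop :=
  R % 2 = p ∧ C % 2 = q ∧ R + m + 3 ≤ 2^(k+1) ∧ C + n + 3 ≤ 2^(k+1) ∧ 3 ≤ R ∧ 3 ≤ C ∧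
    R/2 + m + 1 ≤ 2^k ∧ C/2 + n + 1 ≤ 2^k ∧
    ∀ (a : Fin m) (b : Fin n), pat a b = Tfun (k+1) (R + a) (C + b)

lemma par_emb' {p q m n : ℕ} {pat : Pat A16 m n} (hm : 2 ≤ m) (h : pat ∈ Par p q m n) :
    ∃ k R C : ℕ, GOcc p q m n pat k R C := par_emb hm h

noncomputable def kRC {p q m n : ℕ} {pat : Pat A16 m n} (hm : 2 ≤ m) (h : pat ∈ Par p q m n) :
    ℕ × ℕ × ℕ :=
  ⟨(par_emb' hm h).choose, (par_emb' hm h).choose_spec.choose,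
    (par_emb' hm h).choose_spec.choose_spec.choose⟩

lemma kRC_spec {p q m n : ℕ} {pat : Pat A16 m n} (hm : 2 ≤ m) (h : pat ∈ Par p q m n) :
    GOcc p q m n pat (kRC hm h).1 (kRC hm h).2.1 (kRC hm h).2.2 :=
  (par_emb' hm h).choose_spec.choose_spec.choose_spec

open Classical in
noncomputable def parMap (p q : ℕ) {m n : ℕ} (m' n' : ℕ) (hm : 2 ≤ m)
    (g : ℕ × ℕ × ℕ → ℕ × ℕ × ℕ) : Pat A16 m n → Pat A16 m' n' :=
  fun pat => if h : pat ∈ Par p q m n then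
    (fun a b => Tfun ((g (kRC hm h)).1 + 1) ((g (kRC hm h)).2.1 + a) ((g (kRC hm h)).2.2 + b))
  else fun _ _ => A16.A

lemma parMap_spec (p q : ℕ) {m n : ℕ} (m' n' : ℕ) (hm : 2 ≤ m)
    (g : ℕ × ℕ × ℕ → ℕ × ℕ × ℕ) {pat : Pat A16 m n} (h : pat ∈ Par p q m n) :
    ∀ (a : Fin m') (b : Fin n'), parMap p q m' n' hm g pat a b
      = Tfun ((g (kRC hm h)).1 + 1) ((g (kRC hm h)).2.1 + a) ((g (kRC hm h)).2.2 + b) := by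
  intro a b; simp only [parMap, dif_pos h]

lemma card_le_of_inj {m n m' n' : ℕ} (s : Set (Pat A16 m n)) (t : Set (Pat A16 m' n'))
    (f : Pat A16 m n → Pat A16 m' n') (hmaps : ∀ x ∈ s, f x ∈ t) (hinj : Set.InjOn f s) :
    Nat.card s ≤ Nat.card t := by
  rw [Nat.card_coe_set_eq, Nat.card_coe_set_eq]
  exact Set.ncard_le_ncard_of_injOn f hmaps hinj (Set.toFinite t)

lemma cardE1 (m : ℕ) (hm : 2 ≤ m) (hme : m % 2 = 0) :
    Nat.card (Par 0 1 m m) = Nat.card (Par 1 1 m m) := by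
  apply le_antisymm
  · -- F : shift down by one row
    apply card_le_of_inj _ _ (parMap 0 1 m m hm (fun o => (o.1, o.2.1 + 1, o.2.2)))
    · intro pat h
      obtain ⟨hp, hq, hrb, hcb, hR3, hC3, _, _, ent⟩ := kRC_spec hm h
      exact ⟨((kRC hm h).1 + 1, (kRC hm h).2.1 + 1, (kRC hm h).2.2),
        by simp only; omega, by simp only; omega, by simp only; omega, by simp only; omega,
        parMap_spec 0 1 m m hm _ h⟩
    · intro p1 h1 p2 h2 hF
      obtain ⟨hp₁, hq₁, hrb₁, hcb₁, hR₁, hC₁, _, _, ent₁⟩ := kRC_spec hm h1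
      obtain ⟨hp₂, hq₂, hrb₂, hcb₂, hR₂, hC₂, _, _, ent₂⟩ := kRC_spec hm h2
      set k₁ := (kRC hm h1).1; set R₁ := (kRC hm h1).2.1; set C₁ := (kRC hm h1).2.2
      set k₂ := (kRC hm h2).1; set R₂ := (kRC hm h2).2.1; set C₂ := (kRC hm h2).2.2
      have hv : ∀ u v : ℕ, u < m → v < m →
          Tfun (k₁+1) (R₁+1+u) (C₁+v) = Tfun (k₂+1) (R₂+1+u) (C₂+v) := by
        intro u v hu hv
        have e1 := parMap_spec 0 1 m m hm (fun o => (o.1, o.2.1 + 1, o.2.2)) h1 ⟨u, hu⟩ ⟨v, hv⟩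
        have e2 := parMap_spec 0 1 m m hm (fun o => (o.1, o.2.1 + 1, o.2.2)) h2 ⟨u, hu⟩ ⟨v, hv⟩
        have e3 := congrFun (congrFun hF ⟨u, hu⟩) ⟨v, hv⟩
        rw [e1, e2] at e3
        exact e3
      have key : ∀ u v : ℕ, u < m → v < m →
          Tfun (k₁+1) (R₁+u) (C₁+v) = Tfun (k₂+1) (R₂+u) (C₂+v) := by
        intro u v hu hvv
        rcases Nat.eq_zero_or_pos u with rfl | hu1
        · set b0 := 2*(v/2) with hb0
          have hb1 : b0 + 1 < m := by omega
          have W1 := TU11 k₁ R₁ (C₁+b0) hp₁ (by omega) (by omega) (by omega)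
          have W2 := TU11 k₂ R₂ (C₂+b0) hp₂ (by omega) (by omega) (by omega)
          have e00 := hv 0 b0 (by omega) (by omega)
          have e01 := hv 0 (b0+1) (by omega) (by omega)
          have e10 := hv 1 b0 (by omega) (by omega)
          have e11 := hv 1 (b0+1) (by omega) (by omega)
          simp only [Nat.add_zero] at e00 e01
          rw [show C₁+(b0+1) = C₁+b0+1 by omega, show C₂+(b0+1) = C₂+b0+1 by omega] at e01
          rw [show R₁+1+1 = R₁+2 by omega, show R₂+1+1 = R₂+2 by omega] at e10
          rw [show R₁+1+1 = R₁+2 by omega, show R₂+1+1 = R₂+2 by omega,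
              show C₁+(b0+1) = C₁+b0+1 by omega, show C₂+(b0+1) = C₂+b0+1 by omega] at e11
          rw [e00, e01, e10, e11, W2] at W1
          have h' := Option.some.inj W1
          have h1' := congrArg Prod.fst h'
          have h2' := congrArg Prod.snd h'
          simp only at h1' h2'
          simp only [Nat.add_zero]
          have hv2 : v = b0 ∨ v = b0 + 1 := by omega
          rcases hv2 with h | h
          · rw [h]; exact h1'.symm
          · rw [h, show C₁+(b0+1) = C₁+b0+1 by omega, show C₂+(b0+1) = C₂+b0+1 by omega]
            exact h2'.symm
        · have := hv (u-1) v (by omega) hvv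
          rw [show R₁+1+(u-1) = R₁+u by omega, show R₂+1+(u-1) = R₂+u by omega] at this
          exact this
      funext a b
      rw [ent₁ a b, ent₂ a b]
      exact key a b a.isLt b.isLt
  · -- G : shift up by one row
    apply card_le_of_inj _ _ (parMap 1 1 m m hm (fun o => (o.1, o.2.1 - 1, o.2.2)))
    · intro pat h
      obtain ⟨hp, hq, hrb, hcb, hR3, hC3, _, _, ent⟩ := kRC_spec hm h
      exact ⟨((kRC hm h).1 + 1, (kRC hm h).2.1 - 1, (kRC hm h).2.2),
        by simp only; omega, by simp only; omega, by simp only; omega, by simp only; omega,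
        parMap_spec 1 1 m m hm _ h⟩
    · intro p1 h1 p2 h2 hF
      obtain ⟨hp₁, hq₁, hrb₁, hcb₁, hR₁, hC₁, _, _, ent₁⟩ := kRC_spec hm h1
      obtain ⟨hp₂, hq₂, hrb₂, hcb₂, hR₂, hC₂, _, _, ent₂⟩ := kRC_spec hm h2
      set k₁ := (kRC hm h1).1; set R₁ := (kRC hm h1).2.1; set C₁ := (kRC hm h1).2.2
      set k₂ := (kRC hm h2).1; set R₂ := (kRC hm h2).2.1; set C₂ := (kRC hm h2).2.2
      have hv : ∀ u v : ℕ, u < m → v < m →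
          Tfun (k₁+1) (R₁-1+u) (C₁+v) = Tfun (k₂+1) (R₂-1+u) (C₂+v) := by
        intro u v hu hv
        have e1 := parMap_spec 1 1 m m hm (fun o => (o.1, o.2.1 - 1, o.2.2)) h1 ⟨u, hu⟩ ⟨v, hv⟩
        have e2 := parMap_spec 1 1 m m hm (fun o => (o.1, o.2.1 - 1, o.2.2)) h2 ⟨u, hu⟩ ⟨v, hv⟩
        have e3 := congrFun (congrFun hF ⟨u, hu⟩) ⟨v, hv⟩
        rw [e1, e2] at e3
        exact e3
      have key : ∀ u v : ℕ, u < m → v < m →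
          Tfun (k₁+1) (R₁+u) (C₁+v) = Tfun (k₂+1) (R₂+u) (C₂+v) := by
        intro u v hu hvv
        rcases Nat.lt_or_ge u (m-1) with hu1 | hu1
        · have := hv (u+1) v (by omega) hvv
          rw [show R₁-1+(u+1) = R₁+u by omega, show R₂-1+(u+1) = R₂+u by omega] at this
          exact this
        · have hu2 : u = m - 1 := by omega
          set b0 := 2*(v/2) with hb0
          have hb1 : b0 + 1 < m := by omega
          have W1 := TD k₁ (R₁+m-3) (C₁+b0) (by omega) (by omega) (by omega) (by omega)
          have W2 := TD k₂ (R₂+m-3) (C₂+b0) (by omega) (by omega) (by omega) (by omega)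
          have e00 := hv (m-2) b0 (by omega) (by omega)
          have e01 := hv (m-2) (b0+1) (by omega) (by omega)
          have e10 := hv (m-1) b0 (by omega) (by omega)
          have e11 := hv (m-1) (b0+1) (by omega) (by omega)
          rw [show R₁-1+(m-2) = R₁+m-3 by omega, show R₂-1+(m-2) = R₂+m-3 by omega] at e00 e01
          rw [show R₁-1+(m-1) = R₁+m-3+1 by omega, show R₂-1+(m-1) = R₂+m-3+1 by omega] at e10 e11
          rw [show C₁+(b0+1) = C₁+b0+1 by omega, show C₂+(b0+1) = C₂+b0+1 by omega] at e01 e11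
          rw [e00, e01, e10, e11, W2] at W1
          have h' := Option.some.inj W1
          have h1' := congrArg Prod.fst h'
          have h2' := congrArg Prod.snd h'
          simp only at h1' h2'
          rw [show R₂+m-3+2 = R₂+(m-1) by omega] at h1' h2'
          rw [show R₁+m-3+2 = R₁+(m-1) by omega] at h1' h2'
          subst hu2
          have hv2 : v = b0 ∨ v = b0 + 1 := by omega
          rcases hv2 with h | h
          · rw [h]; exact h1'.symm
          · rw [h, show C₁+(b0+1) = C₁+b0+1 by omega, show C₂+(b0+1) = C₂+b0+1 by omega]
            exact h2'.symm
      funext a b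
      rw [ent₁ a b, ent₂ a b]
      exact key a b a.isLt b.isLt
lemma cardE2 (m : ℕ) (hm : 2 ≤ m) (hme : m % 2 = 0) :
    Nat.card (Par 0 1 m m) = Nat.card (Par 1 0 m m) := by
  apply le_antisymm
  · -- F : shift down-right
    apply card_le_of_inj _ _ (parMap 0 1 m m hm (fun o => (o.1, o.2.1 + 1, o.2.2 + 1)))
    · intro pat h
      obtain ⟨hp, hq, hrb, hcb, hR3, hC3, _, _, ent⟩ := kRC_spec hm h
      exact ⟨((kRC hm h).1 + 1, (kRC hm h).2.1 + 1, (kRC hm h).2.2 + 1),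
        by simp only; omega, by simp only; omega, by simp only; omega, by simp only; omega,
        parMap_spec 0 1 m m hm _ h⟩
    · intro p1 h1 p2 h2 hF
      obtain ⟨hp₁, hq₁, hrb₁, hcb₁, hR₁, hC₁, _, _, ent₁⟩ := kRC_spec hm h1
      obtain ⟨hp₂, hq₂, hrb₂, hcb₂, hR₂, hC₂, _, _, ent₂⟩ := kRC_spec hm h2
      set k₁ := (kRC hm h1).1; set R₁ := (kRC hm h1).2.1; set C₁ := (kRC hm h1).2.2
      set k₂ := (kRC hm h2).1; set R₂ := (kRC hm h2).2.1; set C₂ := (kRC hm h2).2.2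
      have hv : ∀ u v : ℕ, u < m → v < m →
          Tfun (k₁+1) (R₁+1+u) (C₁+1+v) = Tfun (k₂+1) (R₂+1+u) (C₂+1+v) := by
        intro u v hu hv
        have e1 := parMap_spec 0 1 m m hm (fun o => (o.1, o.2.1 + 1, o.2.2 + 1)) h1 ⟨u, hu⟩ ⟨v, hv⟩
        have e2 := parMap_spec 0 1 m m hm (fun o => (o.1, o.2.1 + 1, o.2.2 + 1)) h2 ⟨u, hu⟩ ⟨v, hv⟩
        have e3 := congrFun (congrFun hF ⟨u, hu⟩) ⟨v, hv⟩
        rw [e1, e2] at e3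
        exact e3
      have key : ∀ u v : ℕ, u < m → v < m →
          Tfun (k₁+1) (R₁+u) (C₁+v) = Tfun (k₂+1) (R₂+u) (C₂+v) := by
        intro u v hu hvv
        rcases Nat.eq_zero_or_pos u with rfl | hu1 <;> rcases Nat.eq_zero_or_pos v with rfl | hv1
        · -- corner (0,0) : TCUL
          have W1 := TCUL k₁ R₁ C₁ hp₁ hq₁ (by omega) (by omega)
          have W2 := TCUL k₂ R₂ C₂ hp₂ hq₂ (by omega) (by omega)
          have e00 := hv 0 0 (by omega) (by omega)
          have e01 := hv 0 1 (by omega) (by omega)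
          have e10 := hv 1 0 (by omega) (by omega)
          have e11 := hv 1 1 (by omega) (by omega)
          simp only [Nat.add_zero] at e00 e01 e10 e11
          rw [show R₁+1+1 = R₁+2 by omega, show R₂+1+1 = R₂+2 by omega] at e10 e11
          rw [show C₁+1+1 = C₁+2 by omega, show C₂+1+1 = C₂+2 by omega] at e01 e11
          rw [e00, e01, e10, e11, W2] at W1
          simp only [Nat.add_zero]
          exact (Option.some.inj W1).symm
        · -- top row, v ≥ 1 : TU10
          set b0 := 2*((v-1)/2) with hb0
          have hb1 : b0 + 1 < m := by omega
          have W1 := TU10 k₁ R₁ (C₁+1+b0) hp₁ (by omega) (by omega) (by omega)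
          have W2 := TU10 k₂ R₂ (C₂+1+b0) hp₂ (by omega) (by omega) (by omega)
          have e00 := hv 0 b0 (by omega) (by omega)
          have e01 := hv 0 (b0+1) (by omega) (by omega)
          have e10 := hv 1 b0 (by omega) (by omega)
          have e11 := hv 1 (b0+1) (by omega) (by omega)
          simp only [Nat.add_zero] at e00 e01
          rw [show R₁+1+1 = R₁+2 by omega, show R₂+1+1 = R₂+2 by omega] at e10 e11
          rw [show C₁+1+(b0+1) = C₁+1+b0+1 by omega, show C₂+1+(b0+1) = C₂+1+b0+1 by omega] at e01 e11
          rw [e00, e01, e10, e11, W2] at W1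
          have h' := Option.some.inj W1
          have h1' := congrArg Prod.fst h'
          have h2' := congrArg Prod.snd h'
          simp only at h1' h2'
          simp only [Nat.add_zero]
          have hv2 : v = b0 + 1 ∨ v = b0 + 2 := by omega
          rcases hv2 with h | h
          · rw [h, show C₁+(b0+1) = C₁+1+b0 by omega, show C₂+(b0+1) = C₂+1+b0 by omega]
            exact h1'.symm
          · rw [h, show C₁+(b0+2) = C₁+1+b0+1 by omega, show C₂+(b0+2) = C₂+1+b0+1 by omega]
            exact h2'.symm
        · -- left col, u ≥ 1 : TL10
          set a0 := 2*((u-1)/2) with ha0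
          have ha1 : a0 + 1 < m := by omega
          have W1 := TL10 k₁ (R₁+1+a0) C₁ (by omega) hq₁ (by omega) (by omega)
          have W2 := TL10 k₂ (R₂+1+a0) C₂ (by omega) hq₂ (by omega) (by omega)
          have e00 := hv a0 0 (by omega) (by omega)
          have e01 := hv a0 1 (by omega) (by omega)
          have e10 := hv (a0+1) 0 (by omega) (by omega)
          have e11 := hv (a0+1) 1 (by omega) (by omega)
          simp only [Nat.add_zero] at e00 e10
          rw [show C₁+1+1 = C₁+2 by omega, show C₂+1+1 = C₂+2 by omega] at e01 e11
          rw [show R₁+1+(a0+1) = R₁+1+a0+1 by omega, show R₂+1+(a0+1) = R₂+1+a0+1 by omega] at e10 e11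
          rw [e00, e01, e10, e11, W2] at W1
          have h' := Option.some.inj W1
          have h1' := congrArg Prod.fst h'
          have h2' := congrArg Prod.snd h'
          simp only at h1' h2'
          simp only [Nat.add_zero]
          have hu2 : u = a0 + 1 ∨ u = a0 + 2 := by omega
          rcases hu2 with h | h
          · rw [h, show R₁+(a0+1) = R₁+1+a0 by omega, show R₂+(a0+1) = R₂+1+a0 by omega]
            exact h1'.symm
          · rw [h, show R₁+(a0+2) = R₁+1+a0+1 by omega, show R₂+(a0+2) = R₂+1+a0+1 by omega]
            exact h2'.symm
        · have := hv (u-1) (v-1) (by omega) (by omega)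
          rw [show R₁+1+(u-1) = R₁+u by omega, show R₂+1+(u-1) = R₂+u by omega,
              show C₁+1+(v-1) = C₁+v by omega, show C₂+1+(v-1) = C₂+v by omega] at this
          exact this
      funext a b
      rw [ent₁ a b, ent₂ a b]
      exact key a b a.isLt b.isLt
  · -- G : shift up-left
    apply card_le_of_inj _ _ (parMap 1 0 m m hm (fun o => (o.1, o.2.1 - 1, o.2.2 - 1)))
    · intro pat h
      obtain ⟨hp, hq, hrb, hcb, hR3, hC3, _, _, ent⟩ := kRC_spec hm h
      exact ⟨((kRC hm h).1 + 1, (kRC hm h).2.1 - 1, (kRC hm h).2.2 - 1),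
        by simp only; omega, by simp only; omega, by simp only; omega, by simp only; omega,
        parMap_spec 1 0 m m hm _ h⟩
    · intro p1 h1 p2 h2 hF
      obtain ⟨hp₁, hq₁, hrb₁, hcb₁, hR₁, hC₁, _, _, ent₁⟩ := kRC_spec hm h1
      obtain ⟨hp₂, hq₂, hrb₂, hcb₂, hR₂, hC₂, _, _, ent₂⟩ := kRC_spec hm h2
      set k₁ := (kRC hm h1).1; set R₁ := (kRC hm h1).2.1; set C₁ := (kRC hm h1).2.2
      set k₂ := (kRC hm h2).1; set R₂ := (kRC hm h2).2.1; set C₂ := (kRC hm h2).2.2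
      have hv : ∀ u v : ℕ, u < m → v < m →
          Tfun (k₁+1) (R₁-1+u) (C₁-1+v) = Tfun (k₂+1) (R₂-1+u) (C₂-1+v) := by
        intro u v hu hv
        have e1 := parMap_spec 1 0 m m hm (fun o => (o.1, o.2.1 - 1, o.2.2 - 1)) h1 ⟨u, hu⟩ ⟨v, hv⟩
        have e2 := parMap_spec 1 0 m m hm (fun o => (o.1, o.2.1 - 1, o.2.2 - 1)) h2 ⟨u, hu⟩ ⟨v, hv⟩
        have e3 := congrFun (congrFun hF ⟨u, hu⟩) ⟨v, hv⟩
        rw [e1, e2] at e3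
        exact e3
      have key : ∀ u v : ℕ, u < m → v < m →
          Tfun (k₁+1) (R₁+u) (C₁+v) = Tfun (k₂+1) (R₂+u) (C₂+v) := by
        intro u v hu hvv
        rcases Nat.lt_or_ge u (m-1) with hu1 | hu1 <;> rcases Nat.lt_or_ge v (m-1) with hv1 | hv1
        · have := hv (u+1) (v+1) (by omega) (by omega)
          rw [show R₁-1+(u+1) = R₁+u by omega, show R₂-1+(u+1) = R₂+u by omega,
              show C₁-1+(v+1) = C₁+v by omega, show C₂-1+(v+1) = C₂+v by omega] at this
          exact this
        · -- v = m-1, u < m-1 : TR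
          have hv2 : v = m-1 := by omega
          set a0 := 2*((u+1)/2) with ha0
          have ha1 : a0 + 1 < m := by omega
          have W1 := TR k₁ (R₁-1+a0) (C₁+m-3) (by omega) (by omega) (by omega) (by omega)
          have W2 := TR k₂ (R₂-1+a0) (C₂+m-3) (by omega) (by omega) (by omega) (by omega)
          have e00 := hv a0 (m-2) (by omega) (by omega)
          have e01 := hv a0 (m-1) (by omega) (by omega)
          have e10 := hv (a0+1) (m-2) (by omega) (by omega)
          have e11 := hv (a0+1) (m-1) (by omega) (by omega)
          rw [show C₁-1+(m-2) = C₁+m-3 by omega, show C₂-1+(m-2) = C₂+m-3 by omega] at e00 e10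
          rw [show C₁-1+(m-1) = C₁+m-3+1 by omega, show C₂-1+(m-1) = C₂+m-3+1 by omega] at e01 e11
          rw [show R₁-1+(a0+1) = R₁-1+a0+1 by omega, show R₂-1+(a0+1) = R₂-1+a0+1 by omega] at e10 e11
          rw [e00, e01, e10, e11, W2] at W1
          have h' := Option.some.inj W1
          have h1' := congrArg Prod.fst h'
          have h2' := congrArg Prod.snd h'
          simp only at h1' h2'
          rw [show C₁+m-3+2 = C₁+(m-1) by omega, show C₂+m-3+2 = C₂+(m-1) by omega] at h1' h2'
          subst hv2
          have hu2 : (u = a0 - 1 ∧ 1 ≤ a0) ∨ u = a0 := by omega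
          rcases hu2 with ⟨h, hge⟩ | h
          · rw [h, show R₁+(a0-1) = R₁-1+a0 by omega, show R₂+(a0-1) = R₂-1+a0 by omega]
            exact h1'.symm
          · rw [h, show R₁+a0 = R₁-1+a0+1 by omega, show R₂+a0 = R₂-1+a0+1 by omega]
            exact h2'.symm
        · -- u = m-1, v < m-1 : TD
          have hu2 : u = m-1 := by omega
          set b0 := 2*((v+1)/2) with hb0
          have hb1 : b0 + 1 < m := by omega
          have W1 := TD k₁ (R₁+m-3) (C₁-1+b0) (by omega) (by omega) (by omega) (by omega)
          have W2 := TD k₂ (R₂+m-3) (C₂-1+b0) (by omega) (by omega) (by omega) (by omega)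
          have e00 := hv (m-2) b0 (by omega) (by omega)
          have e01 := hv (m-2) (b0+1) (by omega) (by omega)
          have e10 := hv (m-1) b0 (by omega) (by omega)
          have e11 := hv (m-1) (b0+1) (by omega) (by omega)
          rw [show R₁-1+(m-2) = R₁+m-3 by omega, show R₂-1+(m-2) = R₂+m-3 by omega] at e00 e01
          rw [show R₁-1+(m-1) = R₁+m-3+1 by omega, show R₂-1+(m-1) = R₂+m-3+1 by omega] at e10 e11
          rw [show C₁-1+(b0+1) = C₁-1+b0+1 by omega, show C₂-1+(b0+1) = C₂-1+b0+1 by omega] at e01 e11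
          rw [e00, e01, e10, e11, W2] at W1
          have h' := Option.some.inj W1
          have h1' := congrArg Prod.fst h'
          have h2' := congrArg Prod.snd h'
          simp only at h1' h2'
          rw [show R₁+m-3+2 = R₁+(m-1) by omega, show R₂+m-3+2 = R₂+(m-1) by omega] at h1' h2'
          subst hu2
          have hv2 : (v = b0 - 1 ∧ 1 ≤ b0) ∨ v = b0 := by omega
          rcases hv2 with ⟨h, hge⟩ | h
          · rw [h, show C₁+(b0-1) = C₁-1+b0 by omega, show C₂+(b0-1) = C₂-1+b0 by omega]
            exact h1'.symm
          · rw [h, show C₁+b0 = C₁-1+b0+1 by omega, show C₂+b0 = C₂-1+b0+1 by omega]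
            exact h2'.symm
        · -- corner (m-1, m-1) : TCDR
          have hu2 : u = m-1 := by omega
          have hv2 : v = m-1 := by omega
          have W1 := TCDR k₁ (R₁+m-3) (C₁+m-3) (by omega) (by omega) (by omega) (by omega)
          have W2 := TCDR k₂ (R₂+m-3) (C₂+m-3) (by omega) (by omega) (by omega) (by omega)
          have e00 := hv (m-2) (m-2) (by omega) (by omega)
          have e01 := hv (m-2) (m-1) (by omega) (by omega)
          have e10 := hv (m-1) (m-2) (by omega) (by omega)
          have e11 := hv (m-1) (m-1) (by omega) (by omega)
          rw [show R₁-1+(m-2) = R₁+m-3 by omega, show R₂-1+(m-2) = R₂+m-3 by omega] at e00 e01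
          rw [show R₁-1+(m-1) = R₁+m-3+1 by omega, show R₂-1+(m-1) = R₂+m-3+1 by omega] at e10 e11
          rw [show C₁-1+(m-2) = C₁+m-3 by omega, show C₂-1+(m-2) = C₂+m-3 by omega] at e00 e10
          rw [show C₁-1+(m-1) = C₁+m-3+1 by omega, show C₂-1+(m-1) = C₂+m-3+1 by omega] at e01 e11
          rw [e00, e01, e10, e11, W2] at W1
          have h' := Option.some.inj W1
          rw [show R₁+m-3+2 = R₁+(m-1) by omega, show R₂+m-3+2 = R₂+(m-1) by omega,
              show C₁+m-3+2 = C₁+(m-1) by omega, show C₂+m-3+2 = C₂+(m-1) by omega] at h'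
          subst hu2; subst hv2
          exact h'.symm
      funext a b
      rw [ent₁ a b, ent₂ a b]
      exact key a b a.isLt b.isLt
lemma cardE3 (m : ℕ) (hm3 : 3 ≤ m) (hmo : m % 2 = 1) :
    Nat.card (Par 0 0 m m) = Nat.card (Par 0 1 m (m+1)) := by
  have hm : 2 ≤ m := by omega
  apply le_antisymm
  · -- F : extend one column to the left
    apply card_le_of_inj _ _
      (parMap 0 0 m (m+1) hm (fun o => (o.1, o.2.1, o.2.2 - 1)))
    · intro pat h
      obtain ⟨hp, hq, hrb, hcb, hR3, hC3, _, _, ent⟩ := kRC_spec hm h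
      exact ⟨((kRC hm h).1 + 1, (kRC hm h).2.1, (kRC hm h).2.2 - 1),
        by simp only; omega, by simp only; omega, by simp only; omega, by simp only; omega,
        parMap_spec 0 0 m (m+1) hm _ h⟩
    · intro p1 h1 p2 h2 hF
      obtain ⟨hp₁, hq₁, hrb₁, hcb₁, hR₁, hC₁, _, _, ent₁⟩ := kRC_spec hm h1
      obtain ⟨hp₂, hq₂, hrb₂, hcb₂, hR₂, hC₂, _, _, ent₂⟩ := kRC_spec hm h2
      set k₁ := (kRC hm h1).1; set R₁ := (kRC hm h1).2.1; set C₁ := (kRC hm h1).2.2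
      set k₂ := (kRC hm h2).1; set R₂ := (kRC hm h2).2.1; set C₂ := (kRC hm h2).2.2
      have hv : ∀ u v : ℕ, u < m → v < m+1 →
          Tfun (k₁+1) (R₁+u) (C₁-1+v) = Tfun (k₂+1) (R₂+u) (C₂-1+v) := by
        intro u v hu hv
        have e1 := parMap_spec 0 0 m (m+1) hm (fun o => (o.1, o.2.1, o.2.2 - 1)) h1 ⟨u, hu⟩ ⟨v, hv⟩
        have e2 := parMap_spec 0 0 m (m+1) hm (fun o => (o.1, o.2.1, o.2.2 - 1)) h2 ⟨u, hu⟩ ⟨v, hv⟩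
        have e3 := congrFun (congrFun hF ⟨u, hu⟩) ⟨v, hv⟩
        rw [e1, e2] at e3
        exact e3
      funext a b
      rw [ent₁ a b, ent₂ a b]
      have := hv a (b+1) a.isLt (by omega)
      rw [show C₁-1+((b:ℕ)+1) = C₁+b by omega, show C₂-1+((b:ℕ)+1) = C₂+b by omega] at this
      exact this
  · -- G : drop the first column
    apply card_le_of_inj _ _
      (parMap 0 1 m m hm (fun o => (o.1, o.2.1, o.2.2 + 1)))
    · intro pat h
      obtain ⟨hp, hq, hrb, hcb, hR3, hC3, _, _, ent⟩ := kRC_spec hm h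
      exact ⟨((kRC hm h).1 + 1, (kRC hm h).2.1, (kRC hm h).2.2 + 1),
        by simp only; omega, by simp only; omega, by simp only; omega, by simp only; omega,
        parMap_spec 0 1 m m hm _ h⟩
    · intro p1 h1 p2 h2 hF
      obtain ⟨hp₁, hq₁, hrb₁, hcb₁, hR₁, hC₁, _, _, ent₁⟩ := kRC_spec hm h1
      obtain ⟨hp₂, hq₂, hrb₂, hcb₂, hR₂, hC₂, _, _, ent₂⟩ := kRC_spec hm h2
      set k₁ := (kRC hm h1).1; set R₁ := (kRC hm h1).2.1; set C₁ := (kRC hm h1).2.2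
      set k₂ := (kRC hm h2).1; set R₂ := (kRC hm h2).2.1; set C₂ := (kRC hm h2).2.2
      have hv : ∀ u v : ℕ, u < m → v < m →
          Tfun (k₁+1) (R₁+u) (C₁+1+v) = Tfun (k₂+1) (R₂+u) (C₂+1+v) := by
        intro u v hu hv
        have e1 := parMap_spec 0 1 m m hm (fun o => (o.1, o.2.1, o.2.2 + 1)) h1 ⟨u, hu⟩ ⟨v, hv⟩
        have e2 := parMap_spec 0 1 m m hm (fun o => (o.1, o.2.1, o.2.2 + 1)) h2 ⟨u, hu⟩ ⟨v, hv⟩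
        have e3 := congrFun (congrFun hF ⟨u, hu⟩) ⟨v, hv⟩
        rw [e1, e2] at e3
        exact e3
      have key : ∀ u v : ℕ, u < m → v < m+1 →
          Tfun (k₁+1) (R₁+u) (C₁+v) = Tfun (k₂+1) (R₂+u) (C₂+v) := by
        intro u v hu hvv
        rcases Nat.eq_zero_or_pos v with rfl | hv1
        · -- first column : left determinism
          rcases Nat.mod_two_eq_zero_or_one u with hue | huo
          · -- even row : TL00
            have W1 := TL00 k₁ (R₁+u) C₁ (by omega) hq₁ (by omega) (by omega)
            have W2 := TL00 k₂ (R₂+u) C₂ (by omega) hq₂ (by omega) (by omega)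
            have e0 := hv u 0 (by omega) (by omega)
            have e1 := hv u 1 (by omega) (by omega)
            simp only [Nat.add_zero] at e0
            rw [show C₁+1+1 = C₁+2 by omega, show C₂+1+1 = C₂+2 by omega] at e1
            rw [e0, e1, W2] at W1
            simp only [Nat.add_zero]
            exact (Option.some.inj W1).symm
          · -- odd row : TL10, first component
            have W1 := TL10 k₁ (R₁+u) C₁ (by omega) hq₁ (by omega) (by omega)
            have W2 := TL10 k₂ (R₂+u) C₂ (by omega) hq₂ (by omega) (by omega)
            have e00 := hv u 0 (by omega) (by omega)
            have e01 := hv u 1 (by omega) (by omega)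
            have e10 := hv (u+1) 0 (by omega) (by omega)
            have e11 := hv (u+1) 1 (by omega) (by omega)
            simp only [Nat.add_zero] at e00 e10
            rw [show C₁+1+1 = C₁+2 by omega, show C₂+1+1 = C₂+2 by omega] at e01 e11
            rw [show R₁+(u+1) = R₁+u+1 by omega, show R₂+(u+1) = R₂+u+1 by omega] at e10 e11
            rw [e00, e01, e10, e11, W2] at W1
            have h' := Option.some.inj W1
            have h1' := congrArg Prod.fst h'
            simp only at h1'
            simp only [Nat.add_zero]
            exact h1'.symm
        · have := hv u (v-1) hu (by omega)
          rw [show C₁+1+(v-1) = C₁+v by omega, show C₂+1+(v-1) = C₂+v by omega] at this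
          exact this
      funext a b
      rw [ent₁ a b, ent₂ a b]
      exact key a b a.isLt (by omega)

end SecondABC

/-- Lemma 5.1: a_{1,2}(2n) = a_{2,1}(2n) = a_{2,2}(2n) and
a_{1,1}(2n+1) = b_{1,2}(2n+1). -/
theorem second_abc_equalities (n : ℕ) (hn : 1 ≤ n) :
    (aT 1 2 (2 * n) = aT 2 1 (2 * n) ∧ aT 1 2 (2 * n) = aT 2 2 (2 * n)) ∧
    aT 1 1 (2 * n + 1) = bT 1 2 (2 * n + 1) := by
  have hm : 2 ≤ 2*n := by omega
  have hodd : 3 ≤ 2*n+1 := by omega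
  have h12 : Pij 1 2 (2*n) (2*n) = SecondABC.Par 0 1 (2*n) (2*n) :=
    SecondABC.Pij_eq_Par 1 2 (2*n) (2*n) (by omega) (by omega) (by omega) (by omega) hm hm
  have h21 : Pij 2 1 (2*n) (2*n) = SecondABC.Par 1 0 (2*n) (2*n) :=
    SecondABC.Pij_eq_Par 2 1 (2*n) (2*n) (by omega) (by omega) (by omega) (by omega) hm hm
  have h22 : Pij 2 2 (2*n) (2*n) = SecondABC.Par 1 1 (2*n) (2*n) :=
    SecondABC.Pij_eq_Par 2 2 (2*n) (2*n) (by omega) (by omega) (by omega) (by omega) hm hm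
  have h11 : Pij 1 1 (2*n+1) (2*n+1) = SecondABC.Par 0 0 (2*n+1) (2*n+1) :=
    SecondABC.Pij_eq_Par 1 1 (2*n+1) (2*n+1) (by omega) (by omega) (by omega) (by omega)
      (by omega) (by omega)
  have h12b : Pij 1 2 (2*n+1) (2*n+2) = SecondABC.Par 0 1 (2*n+1) (2*n+2) :=
    SecondABC.Pij_eq_Par 1 2 (2*n+1) (2*n+2) (by omega) (by omega) (by omega) (by omega)
      (by omega) (by omega)
  refine ⟨⟨?_, ?_⟩, ?_⟩
  · show Nat.card (Pij 1 2 (2*n) (2*n)) = Nat.card (Pij 2 1 (2*n) (2*n))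
    rw [h12, h21]
    exact SecondABC.cardE2 (2*n) hm (by omega)
  · show Nat.card (Pij 1 2 (2*n) (2*n)) = Nat.card (Pij 2 2 (2*n) (2*n))
    rw [h12, h22]
    exact SecondABC.cardE1 (2*n) hm (by omega)
  · show Nat.card (Pij 1 1 (2*n+1) (2*n+1)) = Nat.card (Pij 1 2 (2*n+1) (2*n+1+1))
    rw [h11]
    rw [show 2*n+1+1 = 2*n+2 from rfl, h12b]
    exact SecondABC.cardE3 (2*n+1) hodd (by omega)
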